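/- arXiv:2008.00972 — 6 statements merged into one kernel-verified Lean document; each statement's English description precedes it below -/
import Mathlib

section
/- Let φ be a repulsive potential on ℝ^d and Λ ⊂ ℝ^d a region. Let M ≥ 1 and δ > 0, and let 𝛌, 𝛌′ be activity functions on Λ with |𝛌(x)| ≤ M, |𝛌′(x)| ≤ M and |𝛌(x) − 𝛌′(x)| ≤ δ for all x ∈ Λ. Then |Z_Λ(𝛌) − Z_Λ(𝛌′)| ≤ δ·|Λ|·M·e^{|Λ|·M}. In particular, for each M > 0 the map 𝛌 ↦ Z_Λ(𝛌) is uniformly continuous in the sup norm on the set of activity functions bounded by M on Λ. (Lemma 2.4.) -/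
set_option maxHeartbeats 1000000

open MeasureTheory Filter

noncomputable section

/-- Euclidean space ℝ^d. -/
abbrev Euc (d : ℕ) := EuclideanSpace ℝ (Fin d)

/-- `e^{-t}` for `t ∈ [0,∞]`, with the convention `e^{-∞} = 0`. -/
def expNeg (t : ENNReal) : ℝ := if t = ⊤ then 0 else Real.exp (-t.toReal)

/-- The Boltzmann pair weight `∏_{1 ≤ i < j ≤ k} e^{-φ(x_i - x_j)}`. -/
def pairWeight {d : ℕ} (φ : Euc d → ENNReal) (k : ℕ) (x : Fin k → Euc d) : ℝ :=
  ∏ p ∈ Finset.univ.filter (fun p : Fin k × Fin k => p.1 < p.2), expNeg (φ (x p.1 - x p.2))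

/-- The partition function `Z_Λ(𝛌)` of a complex activity function `𝛌` on a region `Λ`. -/
def ZΛ {d : ℕ} (φ : Euc d → ENNReal) (Λ : Set (Euc d)) (lam : Euc d → ℂ) : ℂ :=
  ∑' k : ℕ, ((Nat.factorial k : ℂ))⁻¹ *
    ∫ x in Set.univ.pi (fun _ : Fin k => Λ),
      (∏ i, lam (x i)) * ((pairWeight φ k x : ℝ) : ℂ)

lemma expNeg_nonneg (t : ENNReal) : 0 ≤ expNeg t := by
  unfold expNeg; split
  · exact le_refl 0
  · exact (Real.exp_pos _).le

lemma expNeg_le_one (t : ENNReal) : expNeg t ≤ 1 := by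
  unfold expNeg; split
  · exact zero_le_one
  · exact Real.exp_le_one_iff.mpr (by simp)

lemma measurable_expNeg : Measurable expNeg := by
  unfold expNeg
  exact Measurable.ite (measurableSet_singleton ⊤) measurable_const
    (Real.measurable_exp.comp (ENNReal.measurable_toReal.neg))

lemma pairWeight_nonneg {d : ℕ} (φ : Euc d → ENNReal) (k : ℕ) (x : Fin k → Euc d) :
    0 ≤ pairWeight φ k x :=
  Finset.prod_nonneg fun _ _ => expNeg_nonneg _

lemma pairWeight_le_one {d : ℕ} (φ : Euc d → ENNReal) (k : ℕ) (x : Fin k → Euc d) :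
    pairWeight φ k x ≤ 1 :=
  Finset.prod_le_one (fun _ _ => expNeg_nonneg _) (fun _ _ => expNeg_le_one _)

lemma measurable_pairWeight {d : ℕ} {φ : Euc d → ENNReal} (hφ : Measurable φ) (k : ℕ) :
    Measurable (pairWeight φ k) :=
  Finset.measurable_prod _ fun p _ =>
    measurable_expNeg.comp (hφ.comp ((measurable_pi_apply p.1).sub (measurable_pi_apply p.2)))

lemma prod_diff_le {ι : Type*} (M δ : ℝ) (hM : 1 ≤ M) (hδ : 0 ≤ δ) (s : Finset ι) (f g : ι → ℂ) :
    (∀ i ∈ s, ‖f i‖ ≤ M) → (∀ i ∈ s, ‖g i‖ ≤ M) → (∀ i ∈ s, ‖f i - g i‖ ≤ δ) →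
    ‖∏ i ∈ s, f i - ∏ i ∈ s, g i‖ ≤ s.card * δ * M ^ s.card := by
  have hM0 : (0:ℝ) ≤ M := zero_le_one.trans hM
  induction s using Finset.cons_induction with
  | empty => intro _ _ _; simp
  | cons a s ha ih =>
    intro hf hg hfg
    have hf' : ∀ i ∈ s, ‖f i‖ ≤ M := fun i hi => hf i (Finset.mem_cons_of_mem hi)
    have hg' : ∀ i ∈ s, ‖g i‖ ≤ M := fun i hi => hg i (Finset.mem_cons_of_mem hi)
    have hfg' : ∀ i ∈ s, ‖f i - g i‖ ≤ δ := fun i hi => hfg i (Finset.mem_cons_of_mem hi)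
    have key := ih hf' hg' hfg'
    rw [Finset.prod_cons, Finset.prod_cons, Finset.card_cons]
    have hQ : ‖∏ i ∈ s, g i‖ ≤ M ^ s.card := by
      calc ‖∏ i ∈ s, g i‖ = ∏ i ∈ s, ‖g i‖ := by
            simp [norm_prod]
        _ ≤ ∏ _i ∈ s, M := Finset.prod_le_prod (fun i _ => norm_nonneg _) hg'
        _ = M ^ s.card := Finset.prod_const M
    have hfa : ‖f a‖ ≤ M := hf a (Finset.mem_cons_self a s)
    have hfga : ‖f a - g a‖ ≤ δ := hfg a (Finset.mem_cons_self a s)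
    have expand : f a * ∏ i ∈ s, f i - g a * ∏ i ∈ s, g i
        = f a * (∏ i ∈ s, f i - ∏ i ∈ s, g i) + (f a - g a) * ∏ i ∈ s, g i := by ring
    rw [expand]
    have hpow : (0:ℝ) ≤ M ^ s.card := pow_nonneg hM0 _
    calc ‖f a * (∏ i ∈ s, f i - ∏ i ∈ s, g i) + (f a - g a) * ∏ i ∈ s, g i‖
        ≤ ‖f a‖ * ‖∏ i ∈ s, f i - ∏ i ∈ s, g i‖ + ‖f a - g a‖ * ‖∏ i ∈ s, g i‖ := by
          refine (norm_add_le _ _).trans ?_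
          simp [norm_mul]
      _ ≤ M * (s.card * δ * M ^ s.card) + δ * M ^ s.card := by
          refine add_le_add (mul_le_mul hfa key (norm_nonneg _) hM0) ?_
          exact mul_le_mul hfga hQ (norm_nonneg _) hδ
      _ ≤ (s.card + 1 : ℕ) * δ * M ^ (s.card + 1) := by
          have h := mul_nonneg (mul_nonneg hδ hpow) (sub_nonneg.2 hM)
          push_cast
          have hid : ((s.card:ℝ)+1)*δ*M^(s.card+1) - (M*((s.card:ℝ)*δ*M^s.card) + δ*M^s.card)
              = δ*M^s.card*(M-1) := by ring
          linarith [h, hid]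

lemma norm_pw_le_one {d : ℕ} (φ : Euc d → ENNReal) (k : ℕ) (x : Fin k → Euc d) :
    ‖((pairWeight φ k x : ℝ) : ℂ)‖ ≤ 1 := by
  rw [Complex.norm_real, Real.norm_of_nonneg (pairWeight_nonneg _ _ _)]
  exact pairWeight_le_one _ _ _

lemma integrand_measurable {d : ℕ} {φ : Euc d → ENNReal} (hφ : Measurable φ)
    {mu : Euc d → ℂ} (hmu : Measurable mu) (k : ℕ) :
    Measurable (fun x : Fin k → Euc d => (∏ i, mu (x i)) * ((pairWeight φ k x : ℝ) : ℂ)) :=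
  (Finset.measurable_prod _ fun i _ => hmu.comp (measurable_pi_apply i)).mul
    (Complex.measurable_ofReal.comp (measurable_pairWeight hφ k))

lemma integrand_norm_le {d : ℕ} (φ : Euc d → ENNReal) {Λ : Set (Euc d)}
    {mu : Euc d → ℂ} {M : ℝ} (hM0 : 0 ≤ M) (hbd : ∀ x ∈ Λ, ‖mu x‖ ≤ M) (k : ℕ)
    (x : Fin k → Euc d) (hx : x ∈ Set.univ.pi fun _ => Λ) :
    ‖(∏ i, mu (x i)) * ((pairWeight φ k x : ℝ) : ℂ)‖ ≤ M ^ k := by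
  have hmem : ∀ i, x i ∈ Λ := fun i => hx i (Set.mem_univ i)
  rw [norm_mul]
  have h2 : ‖∏ i, mu (x i)‖ ≤ M ^ k := by
    rw [norm_prod]
    calc ∏ i, ‖mu (x i)‖ ≤ ∏ _i : Fin k, M :=
          Finset.prod_le_prod (fun i _ => norm_nonneg _) (fun i _ => hbd _ (hmem i))
      _ = M ^ k := by simp [Finset.prod_const]
  calc ‖∏ i, mu (x i)‖ * ‖((pairWeight φ k x : ℝ) : ℂ)‖
      ≤ M ^ k * 1 := mul_le_mul h2 (norm_pw_le_one _ _ _) (norm_nonneg _) (pow_nonneg hM0 _)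
    _ = M ^ k := mul_one _

lemma integrand_integrable {d : ℕ} {φ : Euc d → ENNReal} (hφ : Measurable φ)
    {Λ : Set (Euc d)} (hΛmeas : MeasurableSet Λ) (hΛfin : volume Λ < ⊤)
    {mu : Euc d → ℂ} (hmu : Measurable mu) {M : ℝ} (hM0 : 0 ≤ M)
    (hbd : ∀ x ∈ Λ, ‖mu x‖ ≤ M) (k : ℕ) :
    IntegrableOn (fun x : Fin k → Euc d => (∏ i, mu (x i)) * ((pairWeight φ k x : ℝ) : ℂ))
      (Set.univ.pi fun _ => Λ) volume := by
  have hSmeas : MeasurableSet (Set.univ.pi fun _ : Fin k => Λ) :=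
    MeasurableSet.univ_pi fun _ => hΛmeas
  have hSfin : volume (Set.univ.pi fun _ : Fin k => Λ) < ⊤ := by
    rw [volume_pi_pi]
    simpa [Finset.prod_const] using (ENNReal.pow_lt_top hΛfin : volume Λ ^ k < ⊤)
  refine Integrable.mono' (g := fun _ => M ^ k)
    (integrableOn_const hSfin.ne)
    (integrand_measurable hφ hmu k).aestronglyMeasurable ?_
  rw [ae_restrict_iff' hSmeas]
  exact Eventually.of_forall fun x hx => integrand_norm_le φ hM0 hbd k x hx

/-- Lemma 2.4: quantitative uniform continuity of `𝛌 ↦ Z_Λ(𝛌)` in the sup norm. -/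
theorem Z_uniformly_continuous
    (d : ℕ) (hd : 1 ≤ d)
    (φ : Euc d → ENNReal) (hφmeas : Measurable φ)
    (hφsymm : ∀ x, φ (-x) = φ x)
    (Λ : Set (Euc d)) (hΛmeas : MeasurableSet Λ) (hΛbdd : Bornology.IsBounded Λ)
    (M δ : ℝ) (hM : 1 ≤ M) (hδ : 0 < δ)
    (lam lam' : Euc d → ℂ)
    (hlam_meas : Measurable lam) (hlam'_meas : Measurable lam')
    (hlam_supp : ∀ x ∉ Λ, lam x = 0) (hlam'_supp : ∀ x ∉ Λ, lam' x = 0)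
    (hlam_bd : ∀ x ∈ Λ, ‖lam x‖ ≤ M)
    (hlam'_bd : ∀ x ∈ Λ, ‖lam' x‖ ≤ M)
    (hclose : ∀ x ∈ Λ, ‖lam x - lam' x‖ ≤ δ) :
    ‖ZΛ φ Λ lam - ZΛ φ Λ lam'‖ ≤
      δ * (volume Λ).toReal * M * Real.exp ((volume Λ).toReal * M) := by
  have hM0 : (0:ℝ) ≤ M := zero_le_one.trans hM
  have hδ0 : (0:ℝ) ≤ δ := hδ.le
  have hΛfin : volume Λ < ⊤ := hΛbdd.measure_lt_top
  set V : ℝ := (volume Λ).toReal with hVdef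
  have hV0 : 0 ≤ V := ENNReal.toReal_nonneg
  have hlam_bd' : ∀ x ∈ Λ, ‖lam x‖ ≤ M := fun x hx => by
    exact hlam_bd x hx
  have hlam'_bd' : ∀ x ∈ Λ, ‖lam' x‖ ≤ M := fun x hx => by
    exact hlam'_bd x hx
  have hclose' : ∀ x ∈ Λ, ‖lam x - lam' x‖ ≤ δ := fun x hx => by
    exact hclose x hx
  set a : ℕ → ℂ := fun k => ((Nat.factorial k : ℂ))⁻¹ *
    ∫ x in Set.univ.pi (fun _ : Fin k => Λ),
      (∏ i, lam (x i)) * ((pairWeight φ k x : ℝ) : ℂ) with ha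
  set b : ℕ → ℂ := fun k => ((Nat.factorial k : ℂ))⁻¹ *
    ∫ x in Set.univ.pi (fun _ : Fin k => Λ),
      (∏ i, lam' (x i)) * ((pairWeight φ k x : ℝ) : ℂ) with hb
  have hSmeas : ∀ k : ℕ, MeasurableSet (Set.univ.pi fun _ : Fin k => Λ) :=
    fun k => MeasurableSet.univ_pi fun _ => hΛmeas
  have hSvol : ∀ k : ℕ, volume (Set.univ.pi fun _ : Fin k => Λ) = volume Λ ^ k := fun k => by
    rw [volume_pi_pi]; simp [Finset.prod_const]
  have hSfin : ∀ k : ℕ, volume (Set.univ.pi fun _ : Fin k => Λ) < ⊤ := fun k => by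
    rw [hSvol k]; exact ENNReal.pow_lt_top hΛfin
  have hSvolR : ∀ k : ℕ, (volume (Set.univ.pi fun _ : Fin k => Λ)).toReal = V ^ k := fun k => by
    rw [hSvol k, ENNReal.toReal_pow]
  have hFint : ∀ k : ℕ, IntegrableOn
      (fun x : Fin k → Euc d => (∏ i, lam (x i)) * ((pairWeight φ k x : ℝ) : ℂ))
      (Set.univ.pi fun _ => Λ) volume :=
    fun k => integrand_integrable hφmeas hΛmeas hΛfin hlam_meas hM0 hlam_bd' k
  have hGint : ∀ k : ℕ, IntegrableOn
      (fun x : Fin k → Euc d => (∏ i, lam' (x i)) * ((pairWeight φ k x : ℝ) : ℂ))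
      (Set.univ.pi fun _ => Λ) volume :=
    fun k => integrand_integrable hφmeas hΛmeas hΛfin hlam'_meas hM0 hlam'_bd' k
  have hnorm_fac : ∀ k : ℕ, ‖((Nat.factorial k : ℂ))⁻¹‖ = ((Nat.factorial k : ℝ))⁻¹ := by
    intro k; rw [norm_inv]; norm_num
  have hfac_pos : ∀ k : ℕ, (0:ℝ) < (Nat.factorial k : ℝ) := fun k => by
    exact_mod_cast (Nat.factorial_pos k)
  -- bound on each term
  have hak : ∀ (mu : Euc d → ℂ), Measurable mu → (∀ x ∈ Λ, ‖mu x‖ ≤ M) → ∀ k : ℕ,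
      ‖((Nat.factorial k : ℂ))⁻¹ * ∫ x in Set.univ.pi (fun _ : Fin k => Λ),
        (∏ i, mu (x i)) * ((pairWeight φ k x : ℝ) : ℂ)‖ ≤ (M * V) ^ k / (Nat.factorial k : ℝ) := by
    intro mu hmu hbd k
    rw [norm_mul, hnorm_fac]
    have hint := norm_setIntegral_le_of_norm_le_const (μ := volume) (hSfin k)
      (fun x hx => integrand_norm_le φ hM0 hbd k x hx)
    rw [measureReal_def, hSvolR k] at hint
    calc ((Nat.factorial k : ℝ))⁻¹ * ‖_‖ ≤ ((Nat.factorial k : ℝ))⁻¹ * (M ^ k * V ^ k) := by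
          exact mul_le_mul_of_nonneg_left hint (inv_nonneg.2 (hfac_pos k).le)
      _ = (M * V) ^ k / (Nat.factorial k : ℝ) := by rw [mul_pow]; ring
  have hsa : Summable a :=
    Summable.of_norm_bounded (Real.summable_pow_div_factorial (M * V))
      (hak lam hlam_meas hlam_bd')
  have hsb : Summable b :=
    Summable.of_norm_bounded (Real.summable_pow_div_factorial (M * V))
      (hak lam' hlam'_meas hlam'_bd')
  -- the comparison sequence
  set u : ℕ → ℝ := fun k => match k with
    | 0 => 0
    | (n+1) => δ * (M * V) * ((M * V) ^ n / (Nat.factorial n : ℝ)) with hu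
  have hexp : HasSum (fun n : ℕ => (M * V) ^ n / (Nat.factorial n : ℝ)) (Real.exp (M * V)) := by
    have hEq : Real.exp (M * V) = ∑' n : ℕ, (M * V) ^ n / (Nat.factorial n : ℝ) := by
      rw [Real.exp_eq_exp_ℝ, NormedSpace.exp_eq_tsum_div]
    rw [hEq]
    exact (Real.summable_pow_div_factorial (M * V)).hasSum
  have husum : HasSum u (δ * (M * V) * Real.exp (M * V)) := by
    have h1 : HasSum (fun n : ℕ => u (n + 1)) (δ * (M * V) * Real.exp (M * V)) :=
      hexp.mul_left (δ * (M * V))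
    have h2 : HasSum (fun n : ℕ => u (n + 1))
        (δ * (M * V) * Real.exp (M * V) - ∑ i ∈ Finset.range 1, u i) := by
      simpa [hu] using h1
    exact (hasSum_nat_add_iff' 1).mp h2
  -- per-term bounds
  have hbound : ∀ k : ℕ, ‖a k - b k‖ ≤ u k := by
    intro k
    cases k with
    | zero =>
      have h0 : a 0 = b 0 := by
        simp [ha, hb]
      simp [h0, hu]
    | succ n =>
      have hdiff : a (n+1) - b (n+1) = ((Nat.factorial (n+1) : ℂ))⁻¹ *
          ∫ x in Set.univ.pi (fun _ : Fin (n+1) => Λ),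
            ((∏ i, lam (x i)) * ((pairWeight φ (n+1) x : ℝ) : ℂ)
              - (∏ i, lam' (x i)) * ((pairWeight φ (n+1) x : ℝ) : ℂ)) := by
        rw [ha, hb]
        simp only []
        rw [integral_sub (hFint (n+1)) (hGint (n+1)), mul_sub]
      rw [hdiff, norm_mul, hnorm_fac]
      have hptwise : ∀ x ∈ Set.univ.pi (fun _ : Fin (n+1) => Λ),
          ‖(∏ i, lam (x i)) * ((pairWeight φ (n+1) x : ℝ) : ℂ)
            - (∏ i, lam' (x i)) * ((pairWeight φ (n+1) x : ℝ) : ℂ)‖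
            ≤ ((n+1 : ℝ) * δ * M ^ (n+1)) := by
        intro x hx
        have hmem : ∀ i, x i ∈ Λ := fun i => hx i (Set.mem_univ i)
        have hfactor : (∏ i, lam (x i)) * ((pairWeight φ (n+1) x : ℝ) : ℂ)
            - (∏ i, lam' (x i)) * ((pairWeight φ (n+1) x : ℝ) : ℂ)
            = ((∏ i, lam (x i)) - (∏ i, lam' (x i))) * ((pairWeight φ (n+1) x : ℝ) : ℂ) := by
          ring
        rw [hfactor, norm_mul]
        have h1 := prod_diff_le M δ hM hδ0 Finset.univ
          (fun i => lam (x i)) (fun i => lam' (x i))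
          (fun i _ => hlam_bd' _ (hmem i)) (fun i _ => hlam'_bd' _ (hmem i))
          (fun i _ => hclose' _ (hmem i))
        rw [Finset.card_univ, Fintype.card_fin] at h1
        calc ‖(∏ i, lam (x i)) - (∏ i, lam' (x i))‖ * ‖((pairWeight φ (n+1) x : ℝ) : ℂ)‖
            ≤ ((n+1 : ℕ) * δ * M ^ (n+1)) * 1 := by
              refine mul_le_mul h1 (norm_pw_le_one _ _ _) (norm_nonneg _) ?_
              positivity
          _ = ((n+1 : ℝ) * δ * M ^ (n+1)) := by push_cast; ring
      have hint := norm_setIntegral_le_of_norm_le_const (μ := volume) (hSfin (n+1)) hptwise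
      rw [measureReal_def, hSvolR (n+1)] at hint
      have hfac : ((Nat.factorial (n+1) : ℝ)) = ((n:ℝ)+1) * (Nat.factorial n : ℝ) := by
        exact_mod_cast Nat.factorial_succ n
      have hfn : (Nat.factorial n : ℝ) ≠ 0 := (hfac_pos n).ne'
      have hn1 : ((n:ℝ)+1) ≠ 0 := by positivity
      calc ((Nat.factorial (n+1) : ℝ))⁻¹ * ‖_‖
          ≤ ((Nat.factorial (n+1) : ℝ))⁻¹ * (((n+1 : ℝ) * δ * M ^ (n+1)) * V ^ (n+1)) :=
            mul_le_mul_of_nonneg_left hint (inv_nonneg.2 (hfac_pos (n+1)).le)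
        _ = u (n+1) := by
            show _ = δ * (M * V) * ((M * V) ^ n / (Nat.factorial n : ℝ))
            rw [hfac]
            field_simp
            ring
  have hfinal : ‖∑' k, (a k - b k)‖ ≤ δ * (M * V) * Real.exp (M * V) :=
    tsum_of_norm_bounded husum hbound
  have hZdiff : ZΛ φ Λ lam - ZΛ φ Λ lam' = ∑' k, (a k - b k) := by
    rw [ZΛ, ZΛ, ← ha, ← hb]
    exact (Summable.tsum_sub hsa hsb).symm
  rw [hZdiff]
  refine hfinal.trans (le_of_eq ?_)
  rw [mul_comm M V]
  ring

end
end

section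
/- Let φ be a repulsive potential on ℝ^d, Λ ⊂ ℝ^d a region, and let 𝛌 be a bounded, totally zero-free activity function on Λ. Then there exists ε > 0 such that for every η > 0 there exists δ > 0 so that: for all activity functions 𝛌′, 𝛌″ on Λ with sup_x|𝛌′(x)−𝛌(x)| < ε and sup_x|𝛌″(x)−𝛌(x)| < ε, one has Z_Λ(𝛌′) ≠ 0 and Z_Λ(𝛌″) ≠ 0, and moreover if sup_x|𝛌′(x)−𝛌″(x)| < δ then |ρ_{𝛌′}(v) − ρ_{𝛌″}(v)| < η for every v ∈ Λ. (Lemma 2.6: ρ_{𝛌′}(v) is uniformly continuous in 𝛌′ near 𝛌, with modulus of continuity uniform in v.) -/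
open MeasureTheory Filter

noncomputable section

/-- The one-point density `ρ_𝛌(v) = 𝛌(v) Z_Λ(𝛌 e^{-φ(v-·)}) / Z_Λ(𝛌)`. -/
def densityΛ {d : ℕ} (φ : Euc d → ENNReal) (Λ : Set (Euc d)) (lam : Euc d → ℂ)
    (v : Euc d) : ℂ :=
  lam v * ZΛ φ Λ (fun x => lam x * ((expNeg (φ (v - x)) : ℝ) : ℂ)) / ZΛ φ Λ lam

/-- `𝛌` is totally zero-free on `Λ`: `Z_Λ(α·𝛌) ≠ 0` for all measurable `α : ℝ^d → [0,1]`. -/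
def TotallyZeroFreeOn {d : ℕ} (φ : Euc d → ENNReal) (Λ : Set (Euc d))
    (lam : Euc d → ℂ) : Prop :=
  ∀ α : Euc d → ℝ, Measurable α → (∀ x, α x ∈ Set.Icc (0 : ℝ) 1) →
    ZΛ φ Λ (fun x => (α x : ℂ) * lam x) ≠ 0

namespace DensityAux

lemma expNeg_nonneg (t : ENNReal) : 0 ≤ expNeg t := by
  unfold expNeg; split
  · exact le_refl 0
  · exact (Real.exp_pos _).le

lemma expNeg_le_one (t : ENNReal) : expNeg t ≤ 1 := by
  unfold expNeg; split
  · exact zero_le_one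
  · exact Real.exp_le_one_iff.mpr (neg_nonpos.mpr ENNReal.toReal_nonneg)

lemma measurable_expNeg : Measurable expNeg := by
  unfold expNeg
  exact Measurable.ite (by simpa using measurableSet_singleton (⊤ : ENNReal))
    measurable_const (ENNReal.measurable_toReal.neg.exp)

variable {d : ℕ} {φ : Euc d → ENNReal} {Λ : Set (Euc d)}

lemma pairWeight_nonneg (k : ℕ) (x : Fin k → Euc d) : 0 ≤ pairWeight φ k x :=
  Finset.prod_nonneg fun _ _ => expNeg_nonneg _

lemma pairWeight_le_one (k : ℕ) (x : Fin k → Euc d) : pairWeight φ k x ≤ 1 :=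
  Finset.prod_le_one (fun _ _ => expNeg_nonneg _) (fun _ _ => expNeg_le_one _)

lemma pairWeight_measurable (hφ : Measurable φ) (k : ℕ) :
    Measurable (pairWeight φ k) :=
  Finset.measurable_prod _ fun p _ =>
    measurable_expNeg.comp (hφ.comp ((measurable_pi_apply p.1).sub (measurable_pi_apply p.2)))

/-- The integrand of the `k`-th term of `ZΛ`. -/
def integrand (φ : Euc d → ENNReal) (μ : Euc d → ℂ) (k : ℕ) (x : Fin k → Euc d) : ℂ :=
  (∏ i, μ (x i)) * ((pairWeight φ k x : ℝ) : ℂ)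

lemma integrand_meas (hφ : Measurable φ) {μ : Euc d → ℂ} (hμ : Measurable μ) (k : ℕ) :
    Measurable (integrand φ μ k) :=
  (Finset.measurable_prod _ fun i _ => hμ.comp (measurable_pi_apply i)).mul
    (Complex.measurable_ofReal.comp (pairWeight_measurable hφ k))

lemma integrand_abs_le {μ : Euc d → ℂ} {M : ℝ} (hM : ∀ x, ‖μ x‖ ≤ M)
    (k : ℕ) (x : Fin k → Euc d) : ‖integrand φ μ k x‖ ≤ M ^ k := by
  have h0 : (0:ℝ) ≤ M := le_trans (norm_nonneg _) (hM 0)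
  rw [integrand, norm_mul, Complex.norm_real,
    Real.norm_of_nonneg (pairWeight_nonneg k x)]
  calc ‖∏ i, μ (x i)‖ * pairWeight φ k x
      ≤ M ^ k * 1 := by
        apply mul_le_mul _ (pairWeight_le_one k x) (pairWeight_nonneg k x) (by positivity)
        rw [norm_prod]
        calc ∏ i, ‖μ (x i)‖ ≤ ∏ _i : Fin k, M :=
              Finset.prod_le_prod (fun _ _ => norm_nonneg _) (fun i _ => hM (x i))
          _ = M ^ k := by simp
    _ = M ^ k := mul_one _

lemma prod_sub_prod_le {M δ : ℝ} (hM : 0 ≤ M) (hδ : 0 ≤ δ) :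
    ∀ (k : ℕ) (a b : Fin k → ℂ), (∀ i, ‖a i‖ ≤ M) →
      (∀ i, ‖b i‖ ≤ M) → (∀ i, ‖a i - b i‖ ≤ δ) →
      ‖∏ i, a i - ∏ i, b i‖ ≤ k * δ * M ^ (k - 1) := by
  intro k
  induction k with
  | zero => intro a b _ _ _; simp
  | succ n ih =>
    intro a b ha hb hab
    have habs : ∀ (c : Fin (n+1) → ℂ), (∀ i, ‖c i‖ ≤ M) →
        ‖∏ i, c (Fin.succ i)‖ ≤ M ^ n := by
      intro c hc
      rw [norm_prod]
      calc ∏ i : Fin n, ‖c (Fin.succ i)‖ ≤ ∏ _i : Fin n, M :=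
            Finset.prod_le_prod (fun _ _ => norm_nonneg _) (fun i _ => hc _)
        _ = M ^ n := by simp
    have key : ‖∏ i, a i - ∏ i, b i‖ ≤
        ‖a 0 - b 0‖ * ‖∏ i, a (Fin.succ i)‖ +
        ‖b 0‖ * ‖∏ i, a (Fin.succ i) - ∏ i, b (Fin.succ i)‖ := by
      rw [Fin.prod_univ_succ, Fin.prod_univ_succ]
      calc ‖a 0 * ∏ i, a (Fin.succ i) - b 0 * ∏ i, b (Fin.succ i)‖
          = ‖(a 0 - b 0) * ∏ i, a (Fin.succ i) +
              b 0 * (∏ i, a (Fin.succ i) - ∏ i, b (Fin.succ i))‖ := by ring_nf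
        _ ≤ _ := by
            refine le_trans (norm_add_le _ _) ?_
            rw [norm_mul, norm_mul]
      
    have h1 : ‖a 0 - b 0‖ * ‖∏ i, a (Fin.succ i)‖ ≤ δ * M ^ n :=
      mul_le_mul (hab 0) (habs a ha) (norm_nonneg _) hδ
    have h2 : ‖∏ i, a (Fin.succ i) - ∏ i, b (Fin.succ i)‖ ≤
        n * δ * M ^ (n - 1) :=
      ih (fun i => a (Fin.succ i)) (fun i => b (Fin.succ i)) (fun i => ha _) (fun i => hb _)
        (fun i => hab _)
    have h3 : ‖b 0‖ * ‖∏ i, a (Fin.succ i) - ∏ i, b (Fin.succ i)‖ ≤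
        M * (n * δ * M ^ (n - 1)) :=
      mul_le_mul (hb 0) h2 (norm_nonneg _) hM
    have h4 : M * ((n:ℝ) * δ * M ^ (n - 1)) ≤ (n:ℝ) * δ * M ^ n := by
      cases n with
      | zero => simp
      | succ m =>
        have : M * ((↑(m+1):ℝ) * δ * M ^ (m + 1 - 1)) = (↑(m+1):ℝ) * δ * M ^ (m+1) := by
          simp only [Nat.add_sub_cancel]
          ring
        rw [this]
    calc ‖∏ i, a i - ∏ i, b i‖ ≤ _ := key
      _ ≤ δ * M ^ n + (n:ℝ) * δ * M ^ n := by
          refine add_le_add h1 (le_trans h3 h4)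
      _ = (↑(n+1):ℝ) * δ * M ^ ((n+1) - 1) := by
          simp only [Nat.add_sub_cancel]
          push_cast
          ring

/-- The `k`-th term of `ZΛ`. -/
def termZ (φ : Euc d → ENNReal) (Λ : Set (Euc d)) (μ : Euc d → ℂ) (k : ℕ) : ℂ :=
  ((Nat.factorial k : ℂ))⁻¹ * ∫ x in Set.univ.pi (fun _ : Fin k => Λ), integrand φ μ k x

lemma ZΛ_eq_tsum (μ : Euc d → ℂ) : ZΛ φ Λ μ = ∑' k, termZ φ Λ μ k := rfl

lemma volume_pi_set (k : ℕ) :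
    volume (Set.univ.pi fun _ : Fin k => Λ) = (volume Λ) ^ k := by
  rw [volume_pi, Measure.pi_pi]
  simp

lemma volume_pi_set_lt_top (hΛ : volume Λ < ⊤) (k : ℕ) :
    volume (Set.univ.pi fun _ : Fin k => Λ) < ⊤ := by
  rw [volume_pi_set]
  exact ENNReal.pow_lt_top hΛ

lemma volume_pi_set_toReal (k : ℕ) :
    (volume (Set.univ.pi fun _ : Fin k => Λ)).toReal = (volume Λ).toReal ^ k := by
  rw [volume_pi_set, ENNReal.toReal_pow]

lemma integrand_integrable (hφ : Measurable φ) {μ : Euc d → ℂ} (hμ : Measurable μ)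
    {M : ℝ} (hM : ∀ x, ‖μ x‖ ≤ M) (hΛ : volume Λ < ⊤) (k : ℕ) :
    IntegrableOn (integrand φ μ k) (Set.univ.pi fun _ : Fin k => Λ) := by
  refine Integrable.mono' (g := fun _ => M ^ k)
    (integrableOn_const (volume_pi_set_lt_top hΛ k).ne)
    ((integrand_meas hφ hμ k).aestronglyMeasurable) ?_
  exact Eventually.of_forall fun x => integrand_abs_le hM k x

lemma termZ_norm_le (hφ : Measurable φ) {μ : Euc d → ℂ} (hμ : Measurable μ)
    {M : ℝ} (hM : ∀ x, ‖μ x‖ ≤ M) (hΛ : volume Λ < ⊤) (k : ℕ) :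
    ‖termZ φ Λ μ k‖ ≤ ((volume Λ).toReal * M) ^ k / (Nat.factorial k) := by
  have h0 : (0:ℝ) ≤ M := le_trans (norm_nonneg _) (hM 0)
  have hI : ‖∫ x in Set.univ.pi fun _ : Fin k => Λ, integrand φ μ k x‖ ≤
      M ^ k * (volume (Set.univ.pi fun _ : Fin k => Λ)).toReal :=
    norm_setIntegral_le_of_norm_le_const (volume_pi_set_lt_top hΛ k)
      (fun x _ => integrand_abs_le hM k x)
  rw [termZ, norm_mul, norm_inv, Complex.norm_natCast]
  rw [volume_pi_set_toReal] at hI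
  calc ((Nat.factorial k : ℝ))⁻¹ * ‖∫ x in Set.univ.pi fun _ : Fin k => Λ, integrand φ μ k x‖
      ≤ ((Nat.factorial k : ℝ))⁻¹ * (M ^ k * (volume Λ).toReal ^ k) := by
        apply mul_le_mul_of_nonneg_left hI (by positivity)
    _ = ((volume Λ).toReal * M) ^ k / (Nat.factorial k) := by
        rw [mul_pow, div_eq_mul_inv]; ring

lemma summable_termZ (hφ : Measurable φ) {μ : Euc d → ℂ} (hμ : Measurable μ)
    {M : ℝ} (hM : ∀ x, ‖μ x‖ ≤ M) (hΛ : volume Λ < ⊤) :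
    Summable (termZ φ Λ μ) :=
  Summable.of_norm_bounded (Real.summable_pow_div_factorial ((volume Λ).toReal * M))
    (termZ_norm_le hφ hμ hM hΛ)

lemma abs_Z_le (hφ : Measurable φ) {μ : Euc d → ℂ} (hμ : Measurable μ)
    {M : ℝ} (hM : ∀ x, ‖μ x‖ ≤ M) (hΛ : volume Λ < ⊤) :
    ‖ZΛ φ Λ μ‖ ≤
      ∑' k : ℕ, ((volume Λ).toReal * M) ^ k / (Nat.factorial k) := by
  rw [ZΛ_eq_tsum]
  exact tsum_of_norm_bounded (Real.summable_pow_div_factorial _).hasSum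
    (termZ_norm_le hφ hμ hM hΛ)

lemma abs_Z_sub_le (hφ : Measurable φ) {μ₁ μ₂ : Euc d → ℂ}
    (hμ₁ : Measurable μ₁) (hμ₂ : Measurable μ₂) {M δ : ℝ} (hδ0 : 0 ≤ δ)
    (hM₁ : ∀ x, ‖μ₁ x‖ ≤ M) (hM₂ : ∀ x, ‖μ₂ x‖ ≤ M)
    (hd : ∀ x, ‖μ₁ x - μ₂ x‖ ≤ δ) (hΛ : volume Λ < ⊤) :
    ‖ZΛ φ Λ μ₁ - ZΛ φ Λ μ₂‖ ≤
      δ * (volume Λ).toReal *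
        (∑' k : ℕ, ((volume Λ).toReal * M) ^ k / (Nat.factorial k)) := by
  have hM0 : (0:ℝ) ≤ M := le_trans (norm_nonneg _) (hM₁ 0)
  set V := (volume Λ).toReal with hV
  have hV0 : 0 ≤ V := ENNReal.toReal_nonneg
  set A := ∑' k : ℕ, (V * M) ^ k / (Nat.factorial k) with hA
  set b : ℕ → ℝ := fun k => (k:ℝ) * δ * M ^ (k-1) * (V ^ k / (Nat.factorial k)) with hb
  have hbsucc : ∀ k : ℕ, b (k+1) = (δ * V) * ((V * M) ^ k / (Nat.factorial k)) := by
    intro k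
    have hk : ((Nat.factorial k : ℝ)) ≠ 0 := Nat.cast_ne_zero.mpr k.factorial_ne_zero
    simp only [hb, Nat.add_sub_cancel, Nat.factorial_succ, Nat.cast_mul, Nat.cast_add,
      Nat.cast_one, mul_pow, pow_succ]
    field_simp
  have hbsum : Summable b := by
    apply (summable_nat_add_iff 1).mp
    have : (fun k => b (k + 1)) = fun k => (δ * V) * ((V * M) ^ k / (Nat.factorial k)) :=
      funext hbsucc
    rw [this]
    exact (Real.summable_pow_div_factorial (V * M)).mul_left _
  have hbtsum : ∑' k, b k = δ * V * A := by
    rw [Summable.tsum_eq_zero_add hbsum]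
    have : (fun k => b (k + 1)) = fun k => (δ * V) * ((V * M) ^ k / (Nat.factorial k)) :=
      funext hbsucc
    rw [this, tsum_mul_left]
    simp [hb, hA]
  have hterm : ∀ k, ‖termZ φ Λ μ₁ k - termZ φ Λ μ₂ k‖ ≤ b k := by
    intro k
    have hint₁ := integrand_integrable hφ hμ₁ hM₁ hΛ k
    have hint₂ := integrand_integrable hφ hμ₂ hM₂ hΛ k
    have heq : termZ φ Λ μ₁ k - termZ φ Λ μ₂ k = ((Nat.factorial k : ℂ))⁻¹ *
        ∫ x in Set.univ.pi fun _ : Fin k => Λ,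
          (integrand φ μ₁ k x - integrand φ μ₂ k x) := by
      rw [integral_sub hint₁ hint₂, termZ, termZ, mul_sub]
    have hpt : ∀ x, ‖integrand φ μ₁ k x - integrand φ μ₂ k x‖ ≤ (k:ℝ) * δ * M ^ (k-1) := by
      intro x
      have hsplit : integrand φ μ₁ k x - integrand φ μ₂ k x =
          ((∏ i, μ₁ (x i)) - (∏ i, μ₂ (x i))) * ((pairWeight φ k x : ℝ):ℂ) := by
        rw [integrand, integrand]; ring
      rw [hsplit, norm_mul, Complex.norm_real,
        Real.norm_of_nonneg (pairWeight_nonneg k x)]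
      calc ‖(∏ i, μ₁ (x i)) - ∏ i, μ₂ (x i)‖ * pairWeight φ k x
          ≤ ((k:ℝ) * δ * M ^ (k-1)) * 1 :=
            mul_le_mul
              (prod_sub_prod_le hM0 hδ0 k _ _ (fun i => hM₁ _) (fun i => hM₂ _)
                (fun i => hd _))
              (pairWeight_le_one k x) (pairWeight_nonneg _ _) (by positivity)
        _ = (k:ℝ) * δ * M ^ (k-1) := mul_one _
    have hI : ‖∫ x in Set.univ.pi fun _ : Fin k => Λ,
          (integrand φ μ₁ k x - integrand φ μ₂ k x)‖ ≤
        ((k:ℝ) * δ * M ^ (k-1)) * (volume (Set.univ.pi fun _ : Fin k => Λ)).toReal :=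
      norm_setIntegral_le_of_norm_le_const (volume_pi_set_lt_top hΛ k)
        (fun x _ => hpt x)
    rw [volume_pi_set_toReal] at hI
    rw [heq, norm_mul, norm_inv, Complex.norm_natCast]
    calc ((Nat.factorial k : ℝ))⁻¹ * ‖∫ x in Set.univ.pi fun _ : Fin k => Λ,
            (integrand φ μ₁ k x - integrand φ μ₂ k x)‖
        ≤ ((Nat.factorial k : ℝ))⁻¹ * (((k:ℝ) * δ * M ^ (k-1)) * V ^ k) :=
          mul_le_mul_of_nonneg_left hI (by positivity)
      _ = b k := by simp only [hb, div_eq_mul_inv]; ring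
  have hsub : ZΛ φ Λ μ₁ - ZΛ φ Λ μ₂ = ∑' k, (termZ φ Λ μ₁ k - termZ φ Λ μ₂ k) := by
    rw [ZΛ_eq_tsum, ZΛ_eq_tsum,
      Summable.tsum_sub (summable_termZ hφ hμ₁ hM₁ hΛ) (summable_termZ hφ hμ₂ hM₂ hΛ)]
  rw [hsub]
  exact tsum_of_norm_bounded (hbtsum ▸ hbsum.hasSum) hterm

end DensityAux

/-- Lemma 2.6: near a bounded totally zero-free activity `𝛌` the partition function
does not vanish and `ρ_{𝛌'}(v)` is uniformly continuous in `𝛌'`, with a modulus of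
continuity uniform in `v`. -/
theorem density_uniformly_continuous
    (d : ℕ) (hd : 1 ≤ d)
    (φ : Euc d → ENNReal) (hφmeas : Measurable φ)
    (hφsymm : ∀ x, φ (-x) = φ x)
    (Λ : Set (Euc d)) (hΛmeas : MeasurableSet Λ) (hΛbdd : Bornology.IsBounded Λ)
    (lam : Euc d → ℂ) (hlam_meas : Measurable lam)
    (hlam_supp : ∀ x ∉ Λ, lam x = 0)
    (hlam_bdd : ∃ M : ℝ, ∀ x, ‖lam x‖ ≤ M)
    (hzf : TotallyZeroFreeOn φ Λ lam) :
    ∃ ε > 0, ∀ η > 0, ∃ δ > 0,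
      ∀ lam' lam'' : Euc d → ℂ,
        Measurable lam' → Measurable lam'' →
        (∀ x ∉ Λ, lam' x = 0) → (∀ x ∉ Λ, lam'' x = 0) →
        (∃ M : ℝ, ∀ x, ‖lam' x‖ ≤ M) →
        (∃ M : ℝ, ∀ x, ‖lam'' x‖ ≤ M) →
        (∀ x, ‖lam' x - lam x‖ < ε) →
        (∀ x, ‖lam'' x - lam x‖ < ε) →
        ZΛ φ Λ lam' ≠ 0 ∧ ZΛ φ Λ lam'' ≠ 0 ∧
          ((∀ x, ‖lam' x - lam'' x‖ < δ) →
            ∀ v ∈ Λ, ‖densityΛ φ Λ lam' v - densityΛ φ Λ lam'' v‖ < η) := by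
  classical
  obtain ⟨M₀, hM₀⟩ := hlam_bdd
  set M : ℝ := max M₀ 0 + 1 with hMdef
  have hMpos : 0 < M := by positivity
  have hlamM : ∀ x, ‖lam x‖ ≤ M := fun x =>
    (hM₀ x).trans (le_add_of_le_of_nonneg (le_max_left _ _) zero_le_one)
  have hΛvol : volume Λ < ⊤ := hΛbdd.measure_lt_top
  set V : ℝ := (volume Λ).toReal with hVdef
  have hV0 : (0:ℝ) ≤ V := ENNReal.toReal_nonneg
  set A : ℝ := ∑' k : ℕ, (V * M) ^ k / (Nat.factorial k) with hAdef
  have hA0 : (0:ℝ) ≤ A := tsum_nonneg fun k => by positivity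
  have hZ0 : ZΛ φ Λ lam ≠ 0 := by
    have h := hzf (fun _ => 1) measurable_const (fun x => ⟨zero_le_one, le_refl 1⟩)
    have heq : (fun x => ((1:ℝ):ℂ) * lam x) = lam := by funext x; simp
    rwa [heq] at h
  set c : ℝ := ‖ZΛ φ Λ lam‖ with hcdef
  have hc0 : 0 < c := norm_pos_iff.mpr hZ0
  set z : ℝ := c / 2 with hzdef
  have hz0 : 0 < z := by positivity
  set ε : ℝ := min 1 (c / (2 * (V * A + 1))) with hεdef
  have hε0 : 0 < ε := lt_min one_pos (by positivity)
  have hε1 : ε ≤ 1 := min_le_left _ _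
  -- key: any activity within ε of lam (and bounded by M) has |Z| ≥ z
  have hZclose : ∀ μ : Euc d → ℂ, Measurable μ → (∀ x, ‖μ x‖ ≤ M) →
      (∀ x, ‖μ x - lam x‖ ≤ ε) → z ≤ ‖ZΛ φ Λ μ‖ := by
    intro μ hmeas hb hdiff
    have hsub : ‖ZΛ φ Λ μ - ZΛ φ Λ lam‖ ≤ ε * V * A :=
      DensityAux.abs_Z_sub_le hφmeas hmeas hlam_meas hε0.le hb hlamM hdiff hΛvol
    have hεVA : ε * V * A ≤ z := by
      have h1 : ε ≤ c / (2 * (V * A + 1)) := min_le_right _ _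
      have h2 : ε * (V * A) ≤ ε * (V * A + 1) :=
        mul_le_mul_of_nonneg_left (by linarith) hε0.le
      have h3 : ε * (V * A + 1) ≤ (c / (2 * (V * A + 1))) * (V * A + 1) :=
        mul_le_mul_of_nonneg_right h1 (by positivity)
      have h4 : (c / (2 * (V * A + 1))) * (V * A + 1) = c / 2 := by
        field_simp
      rw [hzdef, mul_assoc]
      linarith
    have htri := norm_add_le (ZΛ φ Λ μ) (ZΛ φ Λ lam - ZΛ φ Λ μ)
    rw [add_sub_cancel] at htri
    rw [norm_sub_rev (ZΛ φ Λ lam)] at htri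
    have : c ≤ ‖ZΛ φ Λ μ‖ + ε * V * A := le_trans htri (by linarith)
    rw [hzdef]
    linarith
  refine ⟨ε, hε0, ?_⟩
  intro η hη
  set K : ℝ := A ^ 2 * (1 + 2 * M * V) / z ^ 2 with hKdef
  have hK0 : (0:ℝ) ≤ K := by positivity
  set δ : ℝ := η / (2 * (K + 1)) with hδdef
  have hδ0 : 0 < δ := by positivity
  refine ⟨δ, hδ0, ?_⟩
  intro lam' lam'' hm' hm'' _ _ _ _ hcl' hcl''
  have habs : ∀ ρ : Euc d → ℂ, (∀ x, ‖ρ x - lam x‖ < ε) →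
      ∀ x, ‖ρ x‖ ≤ M := by
    intro ρ hρ x
    have h1 : ‖ρ x‖ ≤ ‖lam x‖ + ‖ρ x - lam x‖ := by
      have := norm_add_le (lam x) (ρ x - lam x)
      rwa [add_sub_cancel] at this
    have h2 : ‖lam x‖ ≤ max M₀ 0 := (hM₀ x).trans (le_max_left _ _)
    have h3 : ‖ρ x - lam x‖ ≤ 1 := le_trans (hρ x).le hε1
    rw [hMdef]
    linarith
  have hM' : ∀ x, ‖lam' x‖ ≤ M := habs lam' hcl'
  have hM'' : ∀ x, ‖lam'' x‖ ≤ M := habs lam'' hcl''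
  have hZ'ge : z ≤ ‖ZΛ φ Λ lam'‖ :=
    hZclose lam' hm' hM' (fun x => (hcl' x).le)
  have hZ''ge : z ≤ ‖ZΛ φ Λ lam''‖ :=
    hZclose lam'' hm'' hM'' (fun x => (hcl'' x).le)
  have hZ'ne : ZΛ φ Λ lam' ≠ 0 := by
    intro h; rw [h, norm_zero] at hZ'ge; linarith
  have hZ''ne : ZΛ φ Λ lam'' ≠ 0 := by
    intro h; rw [h, norm_zero] at hZ''ge; linarith
  refine ⟨hZ'ne, hZ''ne, ?_⟩
  intro hdd v hv
  set μ' : Euc d → ℂ := fun x => lam' x * ((expNeg (φ (v - x)) : ℝ) : ℂ) with hμ'def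
  set μ'' : Euc d → ℂ := fun x => lam'' x * ((expNeg (φ (v - x)) : ℝ) : ℂ) with hμ''def
  have hexpmeas : Measurable fun x : Euc d => ((expNeg (φ (v - x)) : ℝ) : ℂ) :=
    Complex.measurable_ofReal.comp (DensityAux.measurable_expNeg.comp
      (hφmeas.comp (measurable_const.sub measurable_id)))
  have hμ'meas : Measurable μ' := hm'.mul hexpmeas
  have hμ''meas : Measurable μ'' := hm''.mul hexpmeas
  have hbnd : ∀ (ρ : Euc d → ℂ), (∀ x, ‖ρ x‖ ≤ M) →
      ∀ x, ‖ρ x * ((expNeg (φ (v - x)) : ℝ) : ℂ)‖ ≤ M := by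
    intro ρ hρ x
    rw [norm_mul, Complex.norm_real, Real.norm_of_nonneg (DensityAux.expNeg_nonneg _)]
    calc ‖ρ x‖ * expNeg (φ (v - x)) ≤ M * 1 :=
          mul_le_mul (hρ x) (DensityAux.expNeg_le_one _)
            (DensityAux.expNeg_nonneg _) hMpos.le
      _ = M := mul_one _
  have hμ'b : ∀ x, ‖μ' x‖ ≤ M := hbnd lam' hM'
  have hμ''b : ∀ x, ‖μ'' x‖ ≤ M := hbnd lam'' hM''
  have hμdiff : ∀ x, ‖μ' x - μ'' x‖ ≤ δ := by
    intro x
    have hsplit : μ' x - μ'' x = (lam' x - lam'' x) * ((expNeg (φ (v - x)) : ℝ) : ℂ) := by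
      rw [hμ'def, hμ''def]; ring
    rw [hsplit, norm_mul, Complex.norm_real, Real.norm_of_nonneg (DensityAux.expNeg_nonneg _)]
    calc ‖lam' x - lam'' x‖ * expNeg (φ (v - x)) ≤ δ * 1 :=
          mul_le_mul (hdd x).le (DensityAux.expNeg_le_one _)
            (DensityAux.expNeg_nonneg _) hδ0.le
      _ = δ := mul_one _
  have hN' : ‖ZΛ φ Λ μ'‖ ≤ A := DensityAux.abs_Z_le hφmeas hμ'meas hμ'b hΛvol
  have hN'' : ‖ZΛ φ Λ μ''‖ ≤ A := DensityAux.abs_Z_le hφmeas hμ''meas hμ''b hΛvol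
  have hNdiff : ‖ZΛ φ Λ μ' - ZΛ φ Λ μ''‖ ≤ δ * V * A :=
    DensityAux.abs_Z_sub_le hφmeas hμ'meas hμ''meas hδ0.le hμ'b hμ''b hμdiff hΛvol
  have hZ'le : ‖ZΛ φ Λ lam'‖ ≤ A := DensityAux.abs_Z_le hφmeas hm' hM' hΛvol
  have hZ''le : ‖ZΛ φ Λ lam''‖ ≤ A := DensityAux.abs_Z_le hφmeas hm'' hM'' hΛvol
  have hZdiff : ‖ZΛ φ Λ lam' - ZΛ φ Λ lam''‖ ≤ δ * V * A :=
    DensityAux.abs_Z_sub_le hφmeas hm' hm'' hδ0.le hM' hM'' (fun x => (hdd x).le) hΛvol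
  have hident : densityΛ φ Λ lam' v - densityΛ φ Λ lam'' v =
      ((lam' v - lam'' v) * ZΛ φ Λ μ' * ZΛ φ Λ lam''
        + lam'' v * (ZΛ φ Λ μ' - ZΛ φ Λ μ'') * ZΛ φ Λ lam''
        + lam'' v * ZΛ φ Λ μ'' * (ZΛ φ Λ lam'' - ZΛ φ Λ lam'))
        / (ZΛ φ Λ lam' * ZΛ φ Λ lam'') := by
    rw [densityΛ, densityΛ, ← hμ'def, ← hμ''def]
    field_simp
    ring
  rw [hident, norm_div, norm_mul]
  have hnum : ‖(lam' v - lam'' v) * ZΛ φ Λ μ' * ZΛ φ Λ lam''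
        + lam'' v * (ZΛ φ Λ μ' - ZΛ φ Λ μ'') * ZΛ φ Λ lam''
        + lam'' v * ZΛ φ Λ μ'' * (ZΛ φ Λ lam'' - ZΛ φ Λ lam')‖ ≤
      δ * (A ^ 2 * (1 + 2 * M * V)) := by
    have ht1 : ‖(lam' v - lam'' v) * ZΛ φ Λ μ' * ZΛ φ Λ lam''‖ ≤ δ * A * A := by
      rw [norm_mul, norm_mul]
      exact mul_le_mul (mul_le_mul (hdd v).le hN' (norm_nonneg _) hδ0.le)
        hZ''le (norm_nonneg _) (by positivity)
    have ht2 : ‖lam'' v * (ZΛ φ Λ μ' - ZΛ φ Λ μ'') * ZΛ φ Λ lam''‖ ≤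
        M * (δ * V * A) * A := by
      rw [norm_mul, norm_mul]
      exact mul_le_mul (mul_le_mul (hM'' v) hNdiff (norm_nonneg _) hMpos.le)
        hZ''le (norm_nonneg _) (by positivity)
    have ht3 : ‖lam'' v * ZΛ φ Λ μ'' * (ZΛ φ Λ lam'' - ZΛ φ Λ lam')‖ ≤
        M * A * (δ * V * A) := by
      rw [norm_mul, norm_mul, norm_sub_rev (ZΛ φ Λ lam'')]
      exact mul_le_mul (mul_le_mul (hM'' v) hN'' (norm_nonneg _) hMpos.le)
        hZdiff (norm_nonneg _) (by positivity)
    calc ‖_‖ ≤ ‖(lam' v - lam'' v) * ZΛ φ Λ μ' * ZΛ φ Λ lam''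
            + lam'' v * (ZΛ φ Λ μ' - ZΛ φ Λ μ'') * ZΛ φ Λ lam''‖
          + ‖lam'' v * ZΛ φ Λ μ'' * (ZΛ φ Λ lam'' - ZΛ φ Λ lam')‖ :=
            norm_add_le _ _
      _ ≤ (‖(lam' v - lam'' v) * ZΛ φ Λ μ' * ZΛ φ Λ lam''‖
            + ‖lam'' v * (ZΛ φ Λ μ' - ZΛ φ Λ μ'') * ZΛ φ Λ lam''‖)
          + ‖lam'' v * ZΛ φ Λ μ'' * (ZΛ φ Λ lam'' - ZΛ φ Λ lam')‖ :=
            add_le_add_left (norm_add_le _ _) _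
      _ ≤ (δ * A * A + M * (δ * V * A) * A) + M * A * (δ * V * A) :=
            add_le_add (add_le_add ht1 ht2) ht3
      _ = δ * (A ^ 2 * (1 + 2 * M * V)) := by ring
  have hden : z ^ 2 ≤ ‖ZΛ φ Λ lam'‖ * ‖ZΛ φ Λ lam''‖ := by
    calc z ^ 2 = z * z := sq z
      _ ≤ _ := mul_le_mul hZ'ge hZ''ge hz0.le (norm_nonneg _)
  calc ‖(lam' v - lam'' v) * ZΛ φ Λ μ' * ZΛ φ Λ lam''
          + lam'' v * (ZΛ φ Λ μ' - ZΛ φ Λ μ'') * ZΛ φ Λ lam''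
          + lam'' v * ZΛ φ Λ μ'' * (ZΛ φ Λ lam'' - ZΛ φ Λ lam')‖
        / (‖ZΛ φ Λ lam'‖ * ‖ZΛ φ Λ lam''‖)
      ≤ (δ * (A ^ 2 * (1 + 2 * M * V))) / z ^ 2 :=
        div_le_div₀ (by positivity) hnum (by positivity) hden
    _ = δ * K := by rw [hKdef]; ring
    _ < η := by
        rw [hδdef, div_mul_eq_mul_div, div_lt_iff₀ (by positivity)]
        nlinarith

end
end

section
/- Let C > 0 be real. For each λ_0 ∈ [0, e/C) there exists δ > 0 so that for all λ ∈ [0, λ_0] and all real z ≥ 0, (C λ e · e^z · e^{−e^z}) / (1 + C λ e · e^{−e^z}) ≤ 1 − δ. (Lemma 3.3: |g′_λ(z)| ≤ 1 − δ, where g_λ(z) = log(1 + C λ e · e^{−e^z}) and g′_λ(z) = −C λ e · e^z e^{−e^z}/(1 + C λ e · e^{−e^z}).) -/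
set_option maxHeartbeats 1000000 in
/-- Lemma 3.3: for `λ₀ ∈ [0, e/C)` there is `δ > 0` with
`|g′_λ(z)| = Cλe·e^z·e^{−e^z}/(1 + Cλe·e^{−e^z}) ≤ 1 − δ` for all
`λ ∈ [0,λ₀]` and all `z ≥ 0`. -/
theorem g_deriv_strict_contraction
    (C : ℝ) (hC : 0 < C)
    (lam0 : ℝ) (hlam0 : lam0 ∈ Set.Ico 0 (Real.exp 1 / C)) :
    ∃ δ > 0, ∀ lam ∈ Set.Icc (0 : ℝ) lam0, ∀ z : ℝ, 0 ≤ z →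
      C * lam * Real.exp 1 * Real.exp z * Real.exp (-Real.exp z) /
        (1 + C * lam * Real.exp 1 * Real.exp (-Real.exp z)) ≤ 1 - δ := by
  obtain ⟨h0, hlt⟩ := hlam0
  set e := Real.exp 1 with he
  have hepos : 0 < e := Real.exp_pos 1
  have ha0lt : C * lam0 * e < e ^ 2 := by
    have h1 : C * lam0 < e := by
      rw [lt_div_iff₀ hC] at hlt; nlinarith
    nlinarith
  set a0 := C * lam0 * e with ha0def
  have ha0 : 0 ≤ a0 := by positivity
  set ε := e ^ 2 - a0 with hεdef
  have hε : 0 < ε := by linarith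
  refine ⟨e * ε / (e ^ 3 + e ^ 4), by positivity, ?_⟩
  set δ := e * ε / (e ^ 3 + e ^ 4) with hδdef
  have hδpos : 0 < δ := by positivity
  have hδ : δ * (e ^ 3 + e ^ 4) = e * ε := by
    rw [hδdef, div_mul_cancel₀ _ (by positivity)]
  have hc2 : a0 ≤ (1 - δ) * e ^ 2 := by nlinarith
  intro lam hlam z hz
  obtain ⟨hlam1, hlam2⟩ := hlam
  set u := Real.exp z with hu
  have hu1 : 1 ≤ u := by
    rw [hu]; calc (1 : ℝ) = Real.exp 0 := (Real.exp_zero).symm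
    _ ≤ Real.exp z := Real.exp_le_exp.mpr hz
  set E := Real.exp (-u) with hE
  have hEpos : 0 < E := Real.exp_pos _
  set X := Real.exp u with hX
  have hXpos : 0 < X := Real.exp_pos _
  have hEX : E * X = 1 := by
    rw [hE, hX, ← Real.exp_add]; simp
  have h1 : e ^ 2 * (u - 1) ≤ X := by
    have h2 : u - 1 ≤ Real.exp (u - 2) := by
      have := Real.add_one_le_exp (u - 2); linarith
    have h3 : X = e ^ 2 * Real.exp (u - 2) := by
      rw [hX, he, ← Real.exp_nat_mul]
      rw [← Real.exp_add]; norm_num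
    nlinarith
  have h2 : e ≤ X := by
    rw [hX, he]; exact Real.exp_le_exp.mpr hu1
  set a := C * lam * e with hadef
  have ha : 0 ≤ a := by positivity
  have haa0 : a ≤ a0 := by
    rw [hadef, ha0def]
    have : C * lam ≤ C * lam0 := by nlinarith
    nlinarith
  -- key inequality
  have key : a0 * (u - 1 + δ) ≤ (1 - δ) * X := by
    nlinarith [mul_le_mul_of_nonneg_left h1 ha0,
      mul_le_mul_of_nonneg_left h2 (by linarith : (0:ℝ) ≤ (1 - δ) * e ^ 2 - a0),
      mul_nonneg hδpos.le (mul_nonneg (mul_nonneg hepos.le hepos.le) hε.le),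
      hδ, mul_pos hepos hepos]
  have K : a0 * E * (u - 1 + δ) ≤ 1 - δ := by
    have h := mul_le_mul_of_nonneg_right key hEpos.le
    calc a0 * E * (u - 1 + δ) = a0 * (u - 1 + δ) * E := by ring
      _ ≤ (1 - δ) * X * E := h
      _ = (1 - δ) * (E * X) := by ring
      _ = 1 - δ := by rw [hEX]; ring
  have hden : 0 < 1 + a * E := by positivity
  rw [div_le_iff₀ hden]
  nlinarith [K, mul_nonneg (mul_nonneg (sub_nonneg.mpr haa0) hEpos.le)
      (by linarith : (0:ℝ) ≤ u - 1 + δ)]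
end

section
/- Let C > 0 be real and fix λ_0 ∈ [0, e/C). Define g_λ(z) = Log(1 + C λ e · e^{−e^z}) for λ, z ∈ ℂ, where Log is the principal branch of the complex logarithm. Then there exist ε_1, ε_2 > 0 and ε_3 ∈ (0, ε_2) such that for any λ ∈ 𝒩(λ_0, ε_1) and any z ∈ 𝒩̄(log(1+e), ε_2), one has 1 + C λ e · e^{−e^z} ≠ 0 and g_λ(z) ∈ 𝒩(log(1+e), ε_3). (Lemma 3.5, the one-point contraction.) -/
/-- The open neighborhood `𝒩(s,ε) = {z ∈ ℂ : dist(z,[0,s]) < ε}`. -/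
def NN (s ε : ℝ) : Set ℂ := {z | ∃ t ∈ Set.Icc (0 : ℝ) s, ‖z - t‖ < ε}

/-- The closed neighborhood `𝒩̄(s,ε) = {z ∈ ℂ : dist(z,[0,s]) ≤ ε}`. -/
def NNbar (s ε : ℝ) : Set ℂ := {z | ∃ t ∈ Set.Icc (0 : ℝ) s, ‖z - t‖ ≤ ε}

set_option maxHeartbeats 2000000 in
/-- Lemma 3.5 (one-point contraction): for `λ₀ ∈ [0,e/C)` there are `ε₁, ε₂ > 0`
and `ε₃ ∈ (0,ε₂)` so that for `λ ∈ 𝒩(λ₀,ε₁)` and `z ∈ 𝒩̄(log(1+e),ε₂)`,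
`1 + Cλe·e^{−e^z} ≠ 0` and `g_λ(z) = Log(1 + Cλe·e^{−e^z}) ∈ 𝒩(log(1+e),ε₃)`. -/
theorem one_point_contraction
    (C : ℝ) (hC : 0 < C)
    (lam0 : ℝ) (hlam0 : lam0 ∈ Set.Ico 0 (Real.exp 1 / C)) :
    ∃ ε1 > 0, ∃ ε2 > 0, ∃ ε3 : ℝ, 0 < ε3 ∧ ε3 < ε2 ∧
      ∀ lam ∈ NN lam0 ε1, ∀ z ∈ NNbar (Real.log (1 + Real.exp 1)) ε2,
        1 + (C : ℂ) * lam * (Real.exp 1 : ℂ) * Complex.exp (-Complex.exp z) ≠ 0 ∧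
        Complex.log (1 + (C : ℂ) * lam * (Real.exp 1 : ℂ) * Complex.exp (-Complex.exp z)) ∈
          NN (Real.log (1 + Real.exp 1)) ε3 := by
  obtain ⟨hlam0n, hlam0lt⟩ := hlam0
  set E := Real.exp 1 with hE
  have hE0 : 0 < E := Real.exp_pos 1
  have hE3 : E < 3 := by
    have := Real.exp_one_lt_d9; norm_num at this ⊢; linarith
  have hCl : C * lam0 < E := by
    rw [lt_div_iff₀ hC] at hlam0lt; linarith
  have hCl0 : 0 ≤ C * lam0 := mul_nonneg hC.le hlam0n
  clear_value E
  set d := (1 - C * lam0 / E) / (2 * (1 + C * lam0)) with hd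
  have hd0 : 0 < d := by
    apply div_pos
    · have : C * lam0 / E < 1 := (div_lt_one hE0).2 hCl
      linarith
    · linarith
  have hEne : E ≠ 0 := ne_of_gt hE0
  have h1Cne : (1 + C * lam0) ≠ 0 := ne_of_gt (by linarith)
  have hdid : 2 * d * (1 + C * lam0) = 1 - C * lam0 / E := by
    rw [hd]; field_simp
  have hdhalf : d ≤ 1 / 2 := by
    have h1 : 0 ≤ C * lam0 / E := div_nonneg hCl0 hE0.le
    nlinarith
  set ε2 := min (1/16 : ℝ) (d/100) with hε2
  have hε2pos : 0 < ε2 := lt_min (by norm_num) (by linarith)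
  have hε2a : ε2 ≤ 1/16 := min_le_left _ _
  have hε2b : ε2 ≤ d/100 := min_le_right _ _
  set ε1 := d * ε2 / (8 * (C * E + 1)) with hε1
  have hCE0 : 0 < C * E := mul_pos hC hE0
  have hε1pos : 0 < ε1 := by
    rw [hε1]
    exact div_pos (mul_pos hd0 hε2pos) (by linarith only [hCE0])
  set ε3 := ε2 * (1 - d/2) with hε3
  have h8 : ε1 * (8 * (C * E + 1)) = d * ε2 := by
    rw [hε1]; exact div_mul_cancel₀ _ (ne_of_gt (by linarith only [hCE0]))
  have hCEε1 : C * E * ε1 ≤ d * ε2 / 8 := by linarith only [h8, hε1pos.le]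
  have hε3pos : 0 < ε3 := by
    rw [hε3]; exact mul_pos hε2pos (by linarith only [hdhalf])
  have hε3lt : ε3 < ε2 := by
    rw [hε3]; linarith only [mul_pos hε2pos hd0]
  clear_value d ε2 ε1 ε3
  refine ⟨ε1, hε1pos, ε2, hε2pos, ε3, hε3pos, hε3lt, ?_⟩
  intro lam hlam z hz
  obtain ⟨t, ht, hlt⟩ := hlam
  obtain ⟨u, hu, hzu⟩ := hz
  -- real quantities
  set x := Real.exp u with hx
  clear_value x
  have hx1 : 1 ≤ x := by rw [hx]; exact Real.one_le_exp hu.1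
  have hxle : x ≤ 1 + E := by
    rw [hx]
    have h := Real.exp_le_exp.2 hu.2
    rwa [Real.exp_log (by linarith : (0:ℝ) < 1 + E)] at h
  have hx4 : x ≤ 4 := by linarith
  set b := C * t * E * Real.exp (-x) with hb
  clear_value b
  have ht0 : 0 ≤ t := ht.1
  have hb0 : 0 ≤ b := by
    rw [hb]
    exact mul_nonneg (mul_nonneg (mul_nonneg hC.le ht0) hE0.le) (Real.exp_pos _).le
  have hexE : E * Real.exp (-1) = 1 := by
    rw [hE, ← Real.exp_add]; norm_num [Real.exp_zero]
  have hbC : b ≤ C * lam0 := by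
    have h1 : Real.exp (-x) ≤ Real.exp (-1) := Real.exp_le_exp.2 (by linarith)
    have ha : C * t * E ≤ C * lam0 * E :=
      mul_le_mul_of_nonneg_right
        (mul_le_mul_of_nonneg_left ht.2 hC.le) hE0.le
    have h2 : C * t * E * Real.exp (-x) ≤ C * lam0 * E * Real.exp (-1) :=
      mul_le_mul ha h1 (Real.exp_pos _).le (mul_nonneg (mul_nonneg hC.le hlam0n) hE0.le)
    rw [hb]
    calc C * t * E * Real.exp (-x) ≤ C * lam0 * E * Real.exp (-1) := h2
      _ = C * lam0 * (E * Real.exp (-1)) := by ring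
      _ = C * lam0 := by rw [hexE]; ring
  have hbE : b < E := lt_of_le_of_lt hbC hCl
  set L0 := 1 - 2 * d with hL0
  have hL00 : 0 ≤ L0 := by rw [hL0]; linarith only [hdhalf]
  have hL01 : L0 ≤ 1 := by rw [hL0]; linarith only [hd0]
  have hA : 0 ≤ ε2 + ε2^2 := by linarith only [hε2pos.le, sq_nonneg ε2]
  have hB : (0:ℝ) ≤ 1 + 8*ε2 := by linarith only [hε2pos]
  have hkey : x * b ≤ L0 * (1 + b) := by
    have h1 : x - 1 ≤ Real.exp (x - 2) := by
      have := Real.add_one_le_exp (x - 2); linarith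
    have h2 : b * (x - 1) ≤ C * lam0 / E := by
      have e1 : Real.exp (-x) * Real.exp (x - 2) = Real.exp (-2) := by
        rw [← Real.exp_add]; congr 1; ring
      have e2 : E * Real.exp (-2) = Real.exp (-1) := by
        rw [hE, ← Real.exp_add]; norm_num
      have h3' : Real.exp (-x) * (x-1) ≤ Real.exp (-x) * Real.exp (x-2) :=
        mul_le_mul_of_nonneg_left h1 (Real.exp_pos _).le
      have h3 : b * (x - 1) ≤ C * t * E * (Real.exp (-x) * Real.exp (x-2)) := by
        calc b * (x - 1) = C * t * E * (Real.exp (-x) * (x - 1)) := by rw [hb]; ring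
          _ ≤ C * t * E * (Real.exp (-x) * Real.exp (x-2)) :=
              mul_le_mul_of_nonneg_left h3' (mul_nonneg (mul_nonneg hC.le ht0) hE0.le)
      rw [e1] at h3
      have h4 : C * t * E * Real.exp (-2) = C * t * Real.exp (-1) := by
        rw [show C * t * E * Real.exp (-2) = C * t * (E * Real.exp (-2)) by ring, e2]
      have h5 : Real.exp (-1) = 1 / E := by
        field_simp [hE]; rw [hE, ← Real.exp_add]; norm_num [Real.exp_zero]
      have h6 : C * t * Real.exp (-1) ≤ C * lam0 * (1/E) := by
        rw [h5]
        exact mul_le_mul_of_nonneg_right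
          (mul_le_mul_of_nonneg_left ht.2 hC.le) (one_div_nonneg.2 hE0.le)
      calc b * (x-1) ≤ C * t * Real.exp (-1) := by rw [← h4]; exact h3
        _ ≤ C * lam0 * (1/E) := h6
        _ = C * lam0 / E := by ring
    -- x*b = b + b*(x-1) ≤ b + Cλ0/E ≤ L0*(1+b)
    have h7 : 0 ≤ 2 * d * (C * lam0 - b) :=
      mul_nonneg (by linarith only [hd0]) (by linarith only [hbC])
    rw [hL0]
    linarith only [h2, h7, hdid]
  -- complex quantities
  have hexpzu : Complex.exp z = (x : ℂ) * Complex.exp (z - (u:ℂ)) := by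
    rw [hx, Complex.ofReal_exp, ← Complex.exp_add]
    congr 1; ring
  have hbc : (b : ℂ) = (C:ℂ) * (t:ℂ) * (E:ℂ) * Complex.exp (-(x:ℂ)) := by
    rw [hb]; push_cast [Complex.ofReal_exp]; ring
  set a : ℂ := (C : ℂ) * lam * (E : ℂ) * Complex.exp (-Complex.exp z) with ha
  set w : ℂ := (x : ℂ) - Complex.exp z with hw
  set W := ‖w‖ with hW
  have hWle : W ≤ x * (ε2 + ε2^2) := by
    have hq : ‖z - (u:ℂ)‖ ≤ ε2 := hzu
    have hq1 : ‖z - (u:ℂ)‖ ≤ 1 := le_trans hq (by linarith only [hε2a])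
    have h1 : ‖Complex.exp (z - u) - 1 - (z-u)‖ ≤ ‖z-u‖^2 :=
      Complex.norm_exp_sub_one_sub_id_le hq1
    have h2 : ‖Complex.exp (z - u) - 1‖ ≤ ε2 + ε2^2 := by
      calc ‖Complex.exp (z - u) - 1‖
          = ‖(Complex.exp (z-u) - 1 - (z-u)) + (z-u)‖ := by ring_nf
        _ ≤ ‖Complex.exp (z-u) - 1 - (z-u)‖ + ‖z-u‖ :=
            norm_add_le _ _
        _ ≤ ‖z-u‖^2 + ε2 := by linarith only [h1, hq]
        _ ≤ ε2 + ε2^2 := by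
            linarith only [pow_le_pow_left₀ (norm_nonneg (z - (u:ℂ))) hq 2]
    have h3 : w = -((x:ℂ) * (Complex.exp (z - u) - 1)) := by
      rw [hw, hexpzu]; ring
    rw [hW, h3, norm_neg, norm_mul, Complex.norm_real, Real.norm_eq_abs,
      abs_of_pos (by linarith only [hx1])]
    exact mul_le_mul_of_nonneg_left h2 (by linarith only [hx1])
  have hW0 : 0 ≤ W := norm_nonneg w
  have hε2sq : ε2^2 ≤ ε2/16 := by
    linarith only [mul_le_mul_of_nonneg_left hε2a hε2pos.le]
  have hWle4 : W ≤ 4 * (ε2 + ε2^2) :=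
    hWle.trans (mul_le_mul_of_nonneg_right hx4 hA)
  have hWhalf : W ≤ 1/2 := by linarith only [hWle4, hε2sq, hε2a]
  have hW8 : W ≤ 8 * ε2 := by linarith only [hWle4, hε2sq, hε2pos]
  have hEz1 : ‖Complex.exp (-Complex.exp z)‖ ≤ 1 := by
    rw [Complex.norm_exp]
    have h1 : (Complex.exp z).re ≥ x - W := by
      have := Complex.re_le_norm w
      rw [hw] at this; simp at this; linarith [this]
    have : (-Complex.exp z).re ≤ 0 := by simp; linarith
    calc Real.exp ((-Complex.exp z).re) ≤ Real.exp 0 := Real.exp_le_exp.2 this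
      _ = 1 := Real.exp_zero
  have hdiffabs : ‖Complex.exp (-Complex.exp z) - Complex.exp (-(x:ℂ))‖
      ≤ Real.exp (-x) * (W + W^2) := by
    have h1 : Complex.exp (-Complex.exp z) - Complex.exp (-(x:ℂ))
        = Complex.exp (-(x:ℂ)) * (Complex.exp w - 1) := by
      rw [hw, mul_sub, mul_one, ← Complex.exp_add]; ring_nf
    have h2 : ‖Complex.exp w - 1‖ ≤ W + W^2 := by
      have hle1 : ‖w‖ ≤ 1 := by linarith
      have := Complex.norm_exp_sub_one_sub_id_le hle1
      calc ‖Complex.exp w - 1‖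
          = ‖(Complex.exp w - 1 - w) + w‖ := by ring_nf
        _ ≤ ‖Complex.exp w - 1 - w‖ + ‖w‖ := norm_add_le _ _
        _ ≤ W + W^2 := by rw [hW]; linarith only [this]
    rw [h1, norm_mul]
    have h3 : ‖Complex.exp (-(x:ℂ))‖ = Real.exp (-x) := by
      rw [Complex.norm_exp]; norm_num
    rw [h3]
    exact mul_le_mul_of_nonneg_left h2 (Real.exp_pos (-x)).le
  have habsab : ‖a - (b:ℂ)‖ ≤ C * E * ε1 + b * (W + W^2) := by
    have hsplit : a - (b:ℂ) = (C:ℂ) * (E:ℂ) * ((lam - (t:ℂ)) * Complex.exp (-Complex.exp z))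
        + (C:ℂ) * (E:ℂ) * (t:ℂ) * (Complex.exp (-Complex.exp z) - Complex.exp (-(x:ℂ))) := by
      rw [ha, hbc]; push_cast; ring
    rw [hsplit]
    refine le_trans (norm_add_le _ _) ?_
    have h1 : ‖(C:ℂ) * (E:ℂ) * ((lam - (t:ℂ)) * Complex.exp (-Complex.exp z))‖
        ≤ C * E * ε1 := by
      rw [norm_mul, norm_mul, norm_mul, Complex.norm_real, Real.norm_eq_abs, Complex.norm_real, Real.norm_eq_abs,
        abs_of_pos hC, abs_of_pos hE0]
      have hp : ‖lam - (t:ℂ)‖ * ‖Complex.exp (-Complex.exp z)‖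
          ≤ ε1 * 1 :=
        mul_le_mul hlt.le hEz1 (norm_nonneg _) hε1pos.le
      calc C * E * (‖lam - (t:ℂ)‖ * ‖Complex.exp (-Complex.exp z)‖)
          ≤ C * E * (ε1 * 1) :=
            mul_le_mul_of_nonneg_left hp (mul_nonneg hC.le hE0.le)
        _ = C * E * ε1 := by ring
    have h2 : ‖(C:ℂ) * (E:ℂ) * (t:ℂ) * (Complex.exp (-Complex.exp z) - Complex.exp (-(x:ℂ)))‖
        ≤ b * (W + W^2) := by
      rw [norm_mul, norm_mul, norm_mul, Complex.norm_real, Real.norm_eq_abs, Complex.norm_real, Real.norm_eq_abs, Complex.norm_real, Real.norm_eq_abs,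
        abs_of_pos hC, abs_of_pos hE0, abs_of_nonneg ht0]
      calc C * E * t * ‖Complex.exp (-Complex.exp z) - Complex.exp (-(x:ℂ))‖
          ≤ C * E * t * (Real.exp (-x) * (W + W^2)) := by
            exact mul_le_mul_of_nonneg_left hdiffabs
              (mul_nonneg (mul_nonneg hC.le hE0.le) ht0)
        _ = b * (W + W^2) := by rw [hb]; ring
    linarith only [h1, h2]
  -- the quotient h
  have hb1 : (0:ℝ) < 1 + b := by linarith only [hb0]
  have hbne : (1:ℂ) + (b:ℂ) ≠ 0 := by
    intro hcon
    have : ((1 + b : ℝ) : ℂ) = 0 := by push_cast; exact hcon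
    exact absurd (Complex.ofReal_eq_zero.mp this) (ne_of_gt hb1)
  set hq : ℂ := (a - (b:ℂ)) / (1 + (b:ℂ)) with hhq
  set H := ‖hq‖ with hH
  have hH0 : 0 ≤ H := norm_nonneg hq
  have hHle : H ≤ (C * E * ε1 + b * (W + W^2)) / (1 + b) := by
    rw [hH, hhq, norm_div]
    have habs1b : ‖1 + (b:ℂ)‖ = 1 + b := by
      rw [show (1:ℂ) + (b:ℂ) = ((1+b : ℝ):ℂ) by push_cast; ring, Complex.norm_real, Real.norm_eq_abs,
        abs_of_pos hb1]
    rw [habs1b]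
    exact div_le_div_of_nonneg_right habsab hb1.le
  have hHbound : H ≤ ε2 * (1 - 7*d/4) := by
    have hnum : C * E * ε1 + b * (W + W^2)
        ≤ (1 + b) * (C * E * ε1 + L0 * (ε2 + ε2^2) * (1 + 8*ε2)) := by
      have hbW : b * (W + W^2) ≤ L0 * (1+b) * ((ε2 + ε2^2) * (1 + 8*ε2)) := by
        have e1 : b * (W + W^2) = (b * W) * (1 + W) := by ring
        have e2 : b * W ≤ b * (x * (ε2 + ε2^2)) := mul_le_mul_of_nonneg_left hWle hb0
        have e3 : (b * W) * (1 + W) ≤ (x * b * (ε2 + ε2^2)) * (1 + 8*ε2) := by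
          apply mul_le_mul (by linarith only [e2]) (by linarith only [hW8])
            (by linarith only [hW0])
            (mul_nonneg (mul_nonneg (by linarith only [hx1] : (0:ℝ) ≤ x) hb0) hA)
        have e4 : (x * b * (ε2 + ε2^2)) * (1 + 8*ε2)
            ≤ (L0 * (1+b) * (ε2 + ε2^2)) * (1 + 8*ε2) := by
          have : x * b * (ε2 + ε2^2) ≤ L0 * (1+b) * (ε2 + ε2^2) :=
            mul_le_mul_of_nonneg_right hkey hA
          exact mul_le_mul_of_nonneg_right this hB
        rw [e1]; calc (b * W) * (1 + W) ≤ (x * b * (ε2 + ε2^2)) * (1 + 8*ε2) := e3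
          _ ≤ (L0 * (1+b) * (ε2 + ε2^2)) * (1 + 8*ε2) := e4
          _ = L0 * (1+b) * ((ε2 + ε2^2) * (1 + 8*ε2)) := by ring
      linarith only [hbW,
        mul_nonneg hb0 (mul_nonneg (mul_nonneg hC.le hE0.le) hε1pos.le)]
    have hstep : H ≤ C * E * ε1 + L0 * (ε2 + ε2^2) * (1 + 8*ε2) := by
      refine hHle.trans ?_
      rw [div_le_iff₀ hb1]
      calc C * E * ε1 + b * (W + W^2)
          ≤ (1 + b) * (C * E * ε1 + L0 * (ε2 + ε2^2) * (1 + 8*ε2)) := hnum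
        _ = (C * E * ε1 + L0 * (ε2 + ε2^2) * (1 + 8*ε2)) * (1 + b) := by ring
    have hLbound : L0 * (ε2 + ε2^2) * (1 + 8*ε2) ≤ ε2 * (L0 + d/10) := by
      have h1 : (ε2 + ε2^2) * (1 + 8*ε2) ≤ ε2 * (1 + 10*ε2) := by
        nlinarith only [mul_le_mul_of_nonneg_left hε2a (sq_nonneg ε2), sq_nonneg ε2, hε2pos]
      have h2 : L0 * ((ε2 + ε2^2) * (1 + 8*ε2)) ≤ L0 * (ε2 * (1 + 10*ε2)) :=
        mul_le_mul_of_nonneg_left h1 hL00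
      have h3 : L0 * (ε2 * (1 + 10*ε2)) ≤ ε2 * (L0 + d/10) := by
        nlinarith only [mul_le_mul_of_nonneg_right hL01 (sq_nonneg ε2),
          mul_le_mul_of_nonneg_left hε2b hε2pos.le, sq_nonneg ε2, hε2pos, hL00]
      calc L0 * (ε2 + ε2^2) * (1 + 8*ε2) = L0 * ((ε2 + ε2^2) * (1 + 8*ε2)) := by ring
        _ ≤ L0 * (ε2 * (1 + 10*ε2)) := h2
        _ ≤ ε2 * (L0 + d/10) := h3
    rw [hL0] at hLbound hstep
    linarith only [hstep, hLbound, hCEε1, mul_nonneg hd0.le hε2pos.le]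
  have hH16 : H ≤ 1/16 := by
    linarith only [hHbound, hε2a, mul_nonneg hd0.le hε2pos.le]
  -- log split
  have hhcne : (1:ℂ) + hq ≠ 0 := by
    intro hcon
    have : hq = -1 := by linear_combination hcon
    rw [hH, this] at hH16; simp at hH16; linarith
  have h1a : (1:ℂ) + a = ((1 + b : ℝ) : ℂ) * (1 + hq) := by
    rw [hhq]; push_cast
    field_simp
    ring
  have hane : (1:ℂ) + a ≠ 0 := by
    rw [h1a]
    exact mul_ne_zero (by exact_mod_cast (ne_of_gt hb1)) hhcne
  have hlogsplit : Complex.log (1 + a)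
      = (Real.log (1 + b) : ℂ) + Complex.log (1 + hq) := by
    rw [h1a, Complex.log_ofReal_mul hb1 hhcne]
  have hlogbound : ‖Complex.log (1 + hq)‖ ≤ H + H^2 := by
    have hn : ‖hq‖ < 1 := by
      rw [← hH]; linarith
    have := Complex.norm_log_one_add_le hn
    rw [← hH] at this
    have hinv : (1 - H)⁻¹ ≤ 2 := by
      rw [inv_le_comm₀ (by linarith only [hH16]) (by norm_num)]
      linarith only [hH16]
    linarith only [this, mul_le_mul_of_nonneg_left hinv (sq_nonneg H)]
  have hfinal : H + H^2 < ε3 := by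
    have hR0 : (0:ℝ) ≤ ε2 * (1 - 7*d/4) :=
      mul_nonneg hε2pos.le (by linarith only [hdhalf])
    have hRle : ε2 * (1 - 7*d/4) ≤ ε2 := by
      linarith only [mul_nonneg hd0.le hε2pos.le]
    have hHsq : H^2 ≤ ε2 * (d/100) := by
      have h1 : H * H ≤ (ε2 * (1 - 7*d/4)) * (ε2 * (1 - 7*d/4)) :=
        mul_le_mul hHbound hHbound hH0 hR0
      have h2 : (ε2 * (1 - 7*d/4)) * (ε2 * (1 - 7*d/4)) ≤ ε2 * ε2 :=
        mul_le_mul hRle hRle hR0 hε2pos.le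
      have h3 : ε2 * ε2 ≤ ε2 * (d/100) := mul_le_mul_of_nonneg_left hε2b hε2pos.le
      calc H^2 = H * H := sq H
        _ ≤ ε2 * ε2 := le_trans h1 h2
        _ ≤ ε2 * (d/100) := h3
    rw [hε3]
    linarith only [hHbound, hHsq, mul_pos hd0 hε2pos]
  constructor
  · exact hane
  · refine ⟨Real.log (1 + b), ⟨Real.log_nonneg (by linarith only [hb0]), ?_⟩, ?_⟩
    · exact Real.log_le_log (by linarith only [hb0]) (by linarith only [hbE])
    · rw [hlogsplit, show (Real.log (1+b) : ℂ) + Complex.log (1 + hq)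
        - (Real.log (1+b) : ℂ) = Complex.log (1 + hq) by ring]
      exact lt_of_le_of_lt hlogbound hfinal
end

section
/- For every real r > 0 there exists ε_0 > 0 such that for all ε ∈ (0, ε_0], the image of 𝒩̄(r, ε) = {z ∈ ℂ : dist(z, [0,r]) ≤ ε} under the map z ↦ e^z is a convex subset of ℂ. (Fact 3.6.) -/
/-- Key disk lemma: for small `ε`, a convex combination of `exp u₁, exp u₂` with
`|uᵢ| ≤ ε` is `exp v` for some `|v| ≤ ε`. -/
lemma disk_combo {ε : ℝ} (hε : 0 < ε) (hε4 : ε ≤ 1/4) {μ : ℝ} (hμ0 : 0 ≤ μ) (hμ1 : μ ≤ 1)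
    {u₁ u₂ : ℂ} (h1 : ‖u₁‖ ≤ ε) (h2 : ‖u₂‖ ≤ ε) :
    ∃ v : ℂ, ‖v‖ ≤ ε ∧
      Complex.exp v = (μ : ℂ) * Complex.exp u₁ + ((1 : ℂ) - μ) * Complex.exp u₂ := by
  set m : ℂ := (μ : ℂ) * u₁ + ((1 : ℂ) - μ) * u₂ with hm
  set δ : ℂ := u₁ - u₂ with hδ
  set g : ℂ := (μ : ℂ) * Complex.exp (((1 : ℂ) - μ) * δ)
      + ((1 : ℂ) - μ) * Complex.exp (-(μ : ℂ) * δ) with hg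
  have hδle : ‖δ‖ ≤ 2 * ε := by
    calc ‖δ‖ ≤ ‖u₁‖ + ‖u₂‖ := by
          simpa using norm_sub_le u₁ u₂
    _ ≤ 2 * ε := by linarith
  have hμc : ‖(1 : ℂ) - μ‖ = 1 - μ := by
    rw [show (1 : ℂ) - μ = ((1 - μ : ℝ) : ℂ) by push_cast; ring]
    rw [Complex.norm_of_nonneg (by linarith)]
  have hμc' : ‖(μ : ℂ)‖ = μ := by
    rw [Complex.norm_of_nonneg hμ0]
  -- bound on g - 1
  have hB : ‖g - 1‖ ≤ μ * (1 - μ) * ‖δ‖ ^ 2 := by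
    have key : g - 1 = (μ : ℂ) * (Complex.exp (((1 : ℂ) - μ) * δ) - 1 - ((1 : ℂ) - μ) * δ)
        + ((1 : ℂ) - μ) * (Complex.exp (-(μ : ℂ) * δ) - 1 - (-(μ : ℂ) * δ)) := by
      rw [hg]; ring
    have hb1 : ‖((1 : ℂ) - μ) * δ‖ ≤ 1 := by
      rw [norm_mul, hμc]
      calc (1 - μ) * ‖δ‖ ≤ 1 * (2 * ε) := by
            apply mul_le_mul (by linarith) hδle (norm_nonneg _) one_pos.le
      _ ≤ 1 := by linarith
    have hb2 : ‖-(μ : ℂ) * δ‖ ≤ 1 := by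
      rw [norm_mul, norm_neg, hμc']
      calc μ * ‖δ‖ ≤ 1 * (2 * ε) := by
            apply mul_le_mul hμ1 hδle (norm_nonneg _) one_pos.le
      _ ≤ 1 := by linarith
    have e1 := Complex.norm_exp_sub_one_sub_id_le hb1
    have e2 := Complex.norm_exp_sub_one_sub_id_le hb2
    rw [key]
    calc ‖_‖ ≤ ‖(μ : ℂ) * (Complex.exp (((1 : ℂ) - μ) * δ) - 1 - ((1 : ℂ) - μ) * δ)‖
        + ‖((1 : ℂ) - μ) * (Complex.exp (-(μ : ℂ) * δ) - 1 - (-(μ : ℂ) * δ))‖ :=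
          norm_add_le _ _
    _ ≤ μ * (‖((1 : ℂ) - μ) * δ‖ ^ 2) + (1 - μ) * (‖-(μ : ℂ) * δ‖ ^ 2) := by
          rw [norm_mul, norm_mul, hμc, hμc']
          apply add_le_add
          · exact mul_le_mul_of_nonneg_left e1 hμ0
          · exact mul_le_mul_of_nonneg_left e2 (by linarith)
    _ = μ * (1 - μ) * ‖δ‖ ^ 2 * ((1 - μ) + μ) := by
          rw [norm_mul, norm_mul, norm_neg, hμc, hμc']; ring
    _ = μ * (1 - μ) * ‖δ‖ ^ 2 := by ring
  -- the parallelogram-type identity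
  have hident : ‖m‖ ^ 2 + μ * (1 - μ) * ‖δ‖ ^ 2
      = μ * ‖u₁‖ ^ 2 + (1 - μ) * ‖u₂‖ ^ 2 := by
    have h1' : ‖m‖ ^ 2 = Complex.normSq m := Complex.sq_norm m
    have h2' : ‖δ‖ ^ 2 = Complex.normSq δ := Complex.sq_norm δ
    have h3' : ‖u₁‖ ^ 2 = Complex.normSq u₁ := Complex.sq_norm u₁
    have h4' : ‖u₂‖ ^ 2 = Complex.normSq u₂ := Complex.sq_norm u₂
    rw [h1', h2', h3', h4', hm, hδ]
    simp only [Complex.normSq_apply, Complex.add_re, Complex.add_im, Complex.mul_re,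
      Complex.mul_im, Complex.sub_re, Complex.sub_im, Complex.ofReal_re, Complex.ofReal_im,
      Complex.one_re, Complex.one_im]
    ring
  have hBsum : ‖m‖ ^ 2 + μ * (1 - μ) * ‖δ‖ ^ 2 ≤ ε ^ 2 := by
    rw [hident]
    have q1 : ‖u₁‖ ^ 2 ≤ ε ^ 2 := by
      apply pow_le_pow_left₀ (norm_nonneg _) h1
    have q2 : ‖u₂‖ ^ 2 ≤ ε ^ 2 := by
      apply pow_le_pow_left₀ (norm_nonneg _) h2
    nlinarith
  set B : ℝ := μ * (1 - μ) * ‖δ‖ ^ 2 with hBdef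
  have hB0 : 0 ≤ B := by
    apply mul_nonneg (mul_nonneg hμ0 (by linarith)) (sq_nonneg _)
  have hBle : B ≤ ε ^ 2 := by nlinarith [sq_nonneg (‖m‖)]
  have hBhalf : ‖g - 1‖ ≤ 1/2 := by
    calc ‖g - 1‖ ≤ B := hB
    _ ≤ ε ^ 2 := hBle
    _ ≤ 1/2 := by nlinarith
  have hgne : g ≠ 0 := by
    intro h
    rw [h] at hBhalf
    simp at hBhalf
    norm_num at hBhalf
  -- log bound
  have hlog : ‖Complex.log g‖ ≤ (3/2) * B := by
    have : g = 1 + (g - 1) := by ring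
    rw [this]
    calc ‖Complex.log (1 + (g - 1))‖ ≤ (3/2) * ‖g - 1‖ :=
          Complex.norm_log_one_add_half_le_self hBhalf
    _ ≤ (3/2) * B := by
          linarith [hB]
  refine ⟨m + Complex.log g, ?_, ?_⟩
  · have ham : ‖m‖ ≤ ε := by
      nlinarith [norm_nonneg m, sq_nonneg (‖m‖ - ε)]
    calc ‖m + Complex.log g‖ ≤ ‖m‖ + ‖Complex.log g‖ :=
          norm_add_le _ _
    _ ≤ ‖m‖ + (3/2) * B := by linarith
    _ ≤ ‖m‖ + (3/2) * (ε ^ 2 - ‖m‖ ^ 2) := by nlinarith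
    _ ≤ ε := by nlinarith [norm_nonneg m]
  · rw [Complex.exp_add, Complex.exp_log hgne, hg]
    have e1 : Complex.exp m * Complex.exp (((1 : ℂ) - μ) * δ) = Complex.exp u₁ := by
      rw [← Complex.exp_add]; congr 1; rw [hm, hδ]; ring
    have e2 : Complex.exp m * Complex.exp (-(μ : ℂ) * δ) = Complex.exp u₂ := by
      rw [← Complex.exp_add]; congr 1; rw [hm, hδ]; ring
    calc Complex.exp m * ((μ : ℂ) * Complex.exp (((1:ℂ) - μ) * δ)
          + ((1:ℂ) - μ) * Complex.exp (-(μ : ℂ) * δ))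
        = (μ : ℂ) * (Complex.exp m * Complex.exp (((1:ℂ) - μ) * δ))
          + ((1:ℂ) - μ) * (Complex.exp m * Complex.exp (-(μ : ℂ) * δ)) := by ring
    _ = (μ : ℂ) * Complex.exp u₁ + ((1:ℂ) - μ) * Complex.exp u₂ := by rw [e1, e2]

/-- Fact 3.6: for `r > 0` and all sufficiently small `ε > 0`, the image of
`𝒩̄(r,ε)` under `z ↦ e^z` is convex. -/
theorem exp_image_convex (r : ℝ) (hr : 0 < r) :
    ∃ ε0 > 0, ∀ ε : ℝ, 0 < ε → ε ≤ ε0 →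
      Convex ℝ (Complex.exp '' NNbar r ε) := by
  refine ⟨1/4, by norm_num, fun ε hε hε4 => ?_⟩
  rintro x ⟨z₁, ⟨t₁, ht₁, hu₁⟩, rfl⟩ y ⟨z₂, ⟨t₂, ht₂, hu₂⟩, rfl⟩ a b ha hb hab
  set u₁ : ℂ := z₁ - t₁ with hu₁def
  set u₂ : ℂ := z₂ - t₂ with hu₂def
  set s₁ : ℝ := Real.exp t₁ with hs₁
  set s₂ : ℝ := Real.exp t₂ with hs₂
  have hs₁1 : 1 ≤ s₁ := Real.one_le_exp ht₁.1
  have hs₂1 : 1 ≤ s₂ := Real.one_le_exp ht₂.1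
  have hs₁r : s₁ ≤ Real.exp r := Real.exp_le_exp.2 ht₁.2
  have hs₂r : s₂ ≤ Real.exp r := Real.exp_le_exp.2 ht₂.2
  set s : ℝ := a * s₁ + b * s₂ with hs
  have hs1 : 1 ≤ s := by
    calc (1 : ℝ) = a * 1 + b * 1 := by linarith
    _ ≤ a * s₁ + b * s₂ := by
        apply add_le_add (mul_le_mul_of_nonneg_left hs₁1 ha)
          (mul_le_mul_of_nonneg_left hs₂1 hb)
  have hspos : 0 < s := by linarith
  have hsr : s ≤ Real.exp r := by
    calc s ≤ a * Real.exp r + b * Real.exp r := by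
          apply add_le_add (mul_le_mul_of_nonneg_left hs₁r ha)
            (mul_le_mul_of_nonneg_left hs₂r hb)
    _ = Real.exp r := by rw [← add_mul, hab, one_mul]
  set μ : ℝ := a * s₁ / s with hμ
  have hμ0 : 0 ≤ μ := div_nonneg (mul_nonneg ha (by linarith)) hspos.le
  have hμ1 : μ ≤ 1 := by
    rw [hμ, div_le_one hspos]
    nlinarith
  have h1μ : (1 : ℝ) - μ = b * s₂ / s := by
    rw [hμ]; field_simp; rw [hs]; ring
  obtain ⟨v, hvabs, hvexp⟩ := disk_combo hε hε4 hμ0 hμ1 hu₁ hu₂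
  set t : ℝ := Real.log s with ht
  have htmem : t ∈ Set.Icc (0 : ℝ) r := by
    constructor
    · exact Real.log_nonneg hs1
    · calc t ≤ Real.log (Real.exp r) := Real.log_le_log hspos hsr
      _ = r := Real.log_exp r
  have hst : Real.exp t = s := Real.exp_log hspos
  refine ⟨(t : ℂ) + v, ⟨t, htmem, by simpa using hvabs⟩, ?_⟩
  rw [Complex.exp_add, hvexp]
  have hexpt : Complex.exp (t : ℂ) = (s : ℂ) := by
    rw [← Complex.ofReal_exp, hst]
  have hexpz₁ : Complex.exp z₁ = (s₁ : ℂ) * Complex.exp u₁ := by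
    rw [hs₁, Complex.ofReal_exp, ← Complex.exp_add, hu₁def]; congr 1; ring
  have hexpz₂ : Complex.exp z₂ = (s₂ : ℂ) * Complex.exp u₂ := by
    rw [hs₂, Complex.ofReal_exp, ← Complex.exp_add, hu₂def]; congr 1; ring
  rw [hexpt, hexpz₁, hexpz₂]
  have hsne : (s : ℂ) ≠ 0 := by
    exact_mod_cast ne_of_gt hspos
  have hμc : (μ : ℂ) = (a : ℂ) * s₁ / s := by
    rw [hμ]; push_cast; ring
  have h1μc : (1 : ℂ) - (μ : ℂ) = (b : ℂ) * s₂ / s := by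
    rw [show (1 : ℂ) - (μ : ℂ) = ((1 - μ : ℝ) : ℂ) by push_cast; ring, h1μ]
    push_cast; ring
  simp only [Complex.real_smul]
  rw [h1μc, hμc]
  field_simp
end

section
/- Let φ be a repulsive, tempered potential on ℝ^d with C_φ > 0, and fix λ_0 ∈ [0, e/C_φ). Then there exist ε_1, ε_2 > 0 and ε_3 ∈ (0, ε_2) such that for every λ ∈ 𝒩(λ_0, ε_1) and every measurable function 𝐳 : ℝ^d → ℂ with 𝐳(w) ∈ 𝒩̄(log(1+e), ε_2) for all w ∈ ℝ^d, the number Γ := 1 + C_φ λ e · exp( −(1/C_φ) ∫_{ℝ^d} e^{𝐳(w)} (1 − e^{−φ(w)}) dw ) satisfies Γ ≠ 0 and Log(Γ) ∈ 𝒩(log(1+e), ε_3), where Log is the principal branch of the complex logarithm. (Lemma 3.7: contraction of g_λ(𝐳) = ψ(F(λ, ψ^{−1}(𝐳))) with ψ(x) = log(1 + C_φ x) for non-constant 𝐳.) -/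
open MeasureTheory Filter

noncomputable section

lemma clamp_abs_le {zc : ℂ} {L ε s : ℝ} (hs0 : 0 ≤ s) (hsL : s ≤ L)
    (h : ‖zc - s‖ ≤ ε) :
    ‖zc - ((max 0 (min zc.re L) : ℝ) : ℂ)‖ ≤ ε := by
  refine le_trans ?_ h
  rw [Complex.norm_def, Complex.norm_def]
  apply Real.sqrt_le_sqrt
  rw [Complex.normSq_apply, Complex.normSq_apply]
  simp only [Complex.sub_re, Complex.sub_im, Complex.ofReal_re, Complex.ofReal_im, sub_zero]
  have key : (zc.re - max 0 (min zc.re L)) * (zc.re - max 0 (min zc.re L))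
      ≤ (zc.re - s) * (zc.re - s) := by
    rcases le_total zc.re 0 with h0 | h0
    · rw [max_eq_left (le_trans (min_le_left _ _) h0)]
      nlinarith
    · rcases le_total zc.re L with hL | hL
      · rw [min_eq_left hL, max_eq_right h0]
        nlinarith
      · rw [min_eq_right hL, max_eq_right (le_trans hs0 hsL)]
        nlinarith
  linarith

lemma key_contraction {K x u : ℝ} (hK0 : 0 ≤ K) (hKe : K < Real.exp 1)
    (hx : 1 ≤ x) (hu0 : 0 ≤ u) (huKx : u ≤ K * Real.exp (1 - x)) :
    x * u / (1 + u) ≤ K * (Real.exp 1 + 1) / (Real.exp 1 * (1 + K)) := by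
  have he : (0:ℝ) < Real.exp 1 := Real.exp_pos 1
  have huK : u ≤ K := by
    have h1 : Real.exp (1 - x) ≤ 1 := Real.exp_le_one_iff.mpr (by linarith)
    nlinarith
  have hxu : x * u ≤ u + K / Real.exp 1 := by
    have h2 : x - 1 ≤ Real.exp (x - 2) := by
      have := Real.add_one_le_exp (x - 2); linarith
    have h3 : (x - 1) * u ≤ (x - 1) * (K * Real.exp (1 - x)) := by
      apply mul_le_mul_of_nonneg_left huKx; linarith
    have h4 : (x - 1) * (K * Real.exp (1 - x)) ≤ Real.exp (x-2) * (K * Real.exp (1 - x)) := by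
      apply mul_le_mul_of_nonneg_right h2; positivity
    have h5 : Real.exp (x-2) * Real.exp (1 - x) = (Real.exp 1)⁻¹ := by
      rw [← Real.exp_add]; norm_num; rw [Real.exp_neg]
    have h6 : (x-1) * u ≤ K * (Real.exp 1)⁻¹ := by
      calc (x-1)*u ≤ Real.exp (x-2) * (K * Real.exp (1-x)) := le_trans h3 h4
        _ = K * (Real.exp (x-2) * Real.exp (1-x)) := by ring
        _ = K * (Real.exp 1)⁻¹ := by rw [h5]
    rw [div_eq_mul_inv]; nlinarith
  have h1u : (0:ℝ) < 1 + u := by linarith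
  rw [div_le_div_iff₀ h1u (by positivity)]
  have hexp : (u + K / Real.exp 1) * (Real.exp 1 * (1 + K))
      = u * Real.exp 1 + u * Real.exp 1 * K + K + K * K := by
    field_simp; ring
  have hstep : x * u * (Real.exp 1 * (1 + K)) ≤ (u + K / Real.exp 1) * (Real.exp 1 * (1 + K)) := by
    apply mul_le_mul_of_nonneg_right hxu; positivity
  refine le_trans hstep ?_
  rw [hexp]
  nlinarith [mul_nonneg (sub_nonneg.mpr huK) (sub_nonneg.mpr hKe.le)]

lemma abs_exp_sub_one_le' {w : ℂ} (h : ‖w‖ ≤ 1) :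
    ‖Complex.exp w - 1‖ ≤ ‖w‖ + ‖w‖ ^ 2 := by
  have h3 := Complex.norm_exp_sub_one_sub_id_le h
  have h4 : ‖Complex.exp w - 1‖
      ≤ ‖Complex.exp w - 1 - w‖ + ‖w‖ := by
    calc ‖Complex.exp w - 1‖ = ‖Complex.exp w - 1 - w + w‖ := by ring_nf
      _ ≤ _ := norm_add_le _ _
  linarith


lemma num_step2 {P u β c s : ℝ} (hP : 0 ≤ P) (hu : 0 ≤ u) (hβ : 0 ≤ β)
    (hxu2 : u * β ≤ s * (c * (1 + u))) :
    P + u * (β + β ^ 2) ≤ (P + c * s + β ^ 2) * (1 + u) := by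
  nlinarith [mul_nonneg hu (sq_nonneg β), sq_nonneg β, mul_nonneg hP hu]

lemma num_habsww {c ε2 β P : ℝ} (hc0 : 0 ≤ c) (hc1 : c < 1) (hε2 : ε2 = (1 - c) / 600)
    (hβ0 : 0 ≤ β) (hβ8 : β ≤ 8 * ε2) (hP : P = (1 - c) * ε2 / 8) :
    P + c * (ε2 + ε2 ^ 2) + β ^ 2 ≤ c * ε2 + (1 - c) / 4 * ε2 := by
  have hε2pos : 0 < ε2 := by rw [hε2]; linarith
  have h1 : β ^ 2 ≤ 64 * ε2 ^ 2 := by nlinarith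
  have h2 : c * ε2 ^ 2 ≤ ε2 ^ 2 := by nlinarith [sq_nonneg ε2]
  have h3 : ε2 ^ 2 = (1 - c) / 600 * ε2 := by rw [hε2]; ring
  nlinarith

lemma num_half {a c ε2 : ℝ} (ha : a ≤ c * ε2 + (1 - c) / 4 * ε2) (hc0 : 0 ≤ c) (hc1 : c < 1)
    (hε2pos : 0 < ε2) : a ≤ ε2 := by nlinarith

lemma num_final {a c ε2 : ℝ} (ha0 : 0 ≤ a) (ha : a ≤ c * ε2 + (1 - c) / 4 * ε2)
    (haε : a ≤ ε2) (hc0 : 0 ≤ c) (hc1 : c < 1) (hε2 : ε2 = (1 - c) / 600) :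
    a + a ^ 2 < (1 + c) / 2 * ε2 := by
  have hε2pos : 0 < ε2 := by rw [hε2]; linarith
  have h1 : a ^ 2 ≤ ε2 ^ 2 := by nlinarith
  have h3 : ε2 ^ 2 = (1 - c) / 600 * ε2 := by rw [hε2]; ring
  nlinarith [mul_pos (show (0:ℝ) < 1 - c by linarith) hε2pos]

lemma num_log {l a : ℝ} (hl : 0 ≤ l) (ha0 : 0 ≤ a) (ha : a ≤ 1 / 2)
    (hb : l ≤ a ^ 2 * (1 - a)⁻¹ / 2 + a) : l ≤ a + a ^ 2 := by
  have hpos : (0:ℝ) < 1 - a := by linarith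
  have hinv : (1 - a)⁻¹ ≤ 2 := by
    have h10 := inv_mul_cancel₀ hpos.ne'
    nlinarith [inv_nonneg.mpr hpos.le]
  nlinarith [mul_le_mul_of_nonneg_left hinv (sq_nonneg a)]

set_option maxHeartbeats 2000000 in
lemma aux_main (d : ℕ) (ρ : Euc d → ℝ) (hρm : Measurable ρ)
    (hρ0 : ∀ w, 0 ≤ ρ w) (hρ1 : ∀ w, ρ w ≤ 1) (hρint : Integrable ρ)
    (Cφ : ℝ) (hCpos : 0 < Cφ) (hCint : (∫ w : Euc d, ρ w) = Cφ)
    (lam0 : ℝ) (hlam00 : 0 ≤ lam0) (hlam0e : Cφ * lam0 < Real.exp 1) :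
    ∃ ε1 > 0, ∃ ε2 > 0, ∃ ε3 : ℝ, 0 < ε3 ∧ ε3 < ε2 ∧
      ∀ lam ∈ NN lam0 ε1,
        ∀ z : Euc d → ℂ, Measurable z →
          (∀ w : Euc d, z w ∈ NNbar (Real.log (1 + Real.exp 1)) ε2) →
          (1 + (Cφ : ℂ) * lam * (Real.exp 1 : ℂ) *
              Complex.exp (-(((Cφ : ℂ))⁻¹ *
                ∫ w : Euc d, Complex.exp (z w) * ((ρ w : ℝ) : ℂ))) ≠ 0) ∧
          Complex.log (1 + (Cφ : ℂ) * lam * (Real.exp 1 : ℂ) *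
              Complex.exp (-(((Cφ : ℂ))⁻¹ *
                ∫ w : Euc d, Complex.exp (z w) * ((ρ w : ℝ) : ℂ)))) ∈
            NN (Real.log (1 + Real.exp 1)) ε3 := by
  have he : (0:ℝ) < Real.exp 1 := Real.exp_pos 1
  have he2 : (2:ℝ) ≤ Real.exp 1 := by have := Real.add_one_le_exp 1; linarith
  have he3 : Real.exp 1 ≤ 3 := by have := Real.exp_one_lt_d9; linarith
  set E := Real.exp 1 with hE
  set L := Real.log (1 + E) with hL
  have hL0 : 0 ≤ L := Real.log_nonneg (by linarith)
  have hexpL : Real.exp L = 1 + E := Real.exp_log (by linarith)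
  set K := Cφ * lam0 with hK
  have hK0 : 0 ≤ K := mul_nonneg hCpos.le hlam00
  set c := K * (E + 1) / (E * (1 + K)) with hc
  have hc0 : 0 ≤ c := by positivity
  have hc1 : c < 1 := by
    rw [hc, div_lt_one (by positivity)]
    nlinarith
  set ε2 := (1 - c) / 600 with hε2
  have hε2pos : 0 < ε2 := by rw [hε2]; linarith
  have hε2le : ε2 ≤ 1 / 600 := by rw [hε2]; linarith
  set ε1 := (1 - c) * ε2 / (24 * Cφ) with hε1
  clear_value E L K c ε2 ε1
  have hε1pos : 0 < ε1 := by
    rw [hε1]; exact div_pos (mul_pos (by linarith) hε2pos) (by positivity)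
  refine ⟨ε1, hε1pos, ε2, hε2pos, (1 + c) / 2 * ε2, by positivity, ?_, ?_⟩
  · nlinarith
  intro lam hlam z hzm hz
  obtain ⟨t, ht, hlamt⟩ := hlam
  -- the clamped real part
  set τ : Euc d → ℝ := fun w => max 0 (min (z w).re L) with hτdef
  have hτm : Measurable τ := by
    apply Measurable.max measurable_const
    exact Measurable.min (Complex.measurable_re.comp hzm) measurable_const
  have hτ0 : ∀ w, 0 ≤ τ w := fun w => le_max_left _ _
  have hτL : ∀ w, τ w ≤ L := fun w => max_le hL0 (min_le_right _ _)
  have hτz : ∀ w, ‖z w - ((τ w : ℝ) : ℂ)‖ ≤ ε2 := by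
    intro w
    obtain ⟨s, hs, hse⟩ := hz w
    exact clamp_abs_le hs.1 hs.2 hse
  have hexpτ1 : ∀ w, 1 ≤ Real.exp (τ w) := fun w => Real.one_le_exp (hτ0 w)
  have hexpτE : ∀ w, Real.exp (τ w) ≤ 1 + E := fun w => by
    calc Real.exp (τ w) ≤ Real.exp L := Real.exp_le_exp.mpr (hτL w)
      _ = 1 + E := hexpL
  -- integrability
  have h1 : Integrable (fun w : Euc d => Real.exp (τ w) * ρ w) := by
    refine Integrable.mono' (hρint.const_mul 4) ?_ (ae_of_all _ fun w => ?_)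
    · exact ((Real.measurable_exp.comp hτm).mul hρm).aestronglyMeasurable
    · rw [Real.norm_eq_abs, abs_of_nonneg (mul_nonneg (Real.exp_pos _).le (hρ0 w))]
      apply mul_le_mul_of_nonneg_right _ (hρ0 w)
      calc Real.exp (τ w) ≤ 1 + E := hexpτE w
        _ ≤ 4 := by linarith
  have hzre : ∀ w, (z w).re ≤ τ w + ε2 := by
    intro w
    have h1' := Complex.abs_re_le_norm (z w - ((τ w : ℝ) : ℂ))
    rw [Complex.sub_re, Complex.ofReal_re] at h1'
    have := le_trans h1' (hτz w)
    have := abs_le.mp this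
    linarith [this.2]
  have h2 : Integrable (fun w : Euc d => Complex.exp (z w) * ((ρ w : ℝ) : ℂ)) := by
    refine Integrable.mono' (hρint.const_mul 12) ?_ (ae_of_all _ fun w => ?_)
    · exact ((Complex.measurable_exp.comp hzm).mul
        (Complex.measurable_ofReal.comp hρm)).aestronglyMeasurable
    · rw [norm_mul, Complex.norm_exp,
        Complex.norm_real, Real.norm_eq_abs, abs_of_nonneg (hρ0 w)]
      apply mul_le_mul _ le_rfl (hρ0 w) (by norm_num)
      calc Real.exp (z w).re ≤ Real.exp (τ w + ε2) := Real.exp_le_exp.mpr (hzre w)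
        _ = Real.exp (τ w) * Real.exp ε2 := Real.exp_add _ _
        _ ≤ (1 + E) * Real.exp 1 := by
            apply mul_le_mul (hexpτE w) (Real.exp_le_exp.mpr (by linarith)) (Real.exp_pos _).le
              (by linarith)
        _ ≤ 12 := by nlinarith
  -- the real comparison integral
  set X := ∫ w : Euc d, Real.exp (τ w) * ρ w with hX
  have hXl : Cφ ≤ X := by
    rw [← hCint]
    apply integral_mono hρint h1
    intro w
    exact le_mul_of_one_le_left (hρ0 w) (hexpτ1 w)
  have hXpos : 0 < X := lt_of_lt_of_le hCpos hXl
  set x := X / Cφ with hx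
  have hx1 : 1 ≤ x := (one_le_div hCpos).mpr hXl
  have hx4 : x ≤ 4 := by
    rw [hx, div_le_iff₀ hCpos]
    have : X ≤ (1 + E) * Cφ := by
      rw [← hCint, ← integral_const_mul]
      apply integral_mono h1 (hρint.const_mul _)
      intro w
      exact mul_le_mul_of_nonneg_right (hexpτE w) (hρ0 w)
    nlinarith
  -- the complex integral
  set I := ∫ w : Euc d, Complex.exp (z w) * ((ρ w : ℝ) : ℂ) with hI
  have hIX : ‖I - (X : ℂ)‖ ≤ (ε2 + ε2 ^ 2) * X := by
    have hXC : (X : ℂ) = ∫ w : Euc d, ((Real.exp (τ w) * ρ w : ℝ) : ℂ) := by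
      rw [hX]; exact (integral_ofReal (𝕜 := ℂ)).symm
    rw [hI, hXC]
    have hsub : (∫ w : Euc d, Complex.exp (z w) * ((ρ w : ℝ) : ℂ))
        - (∫ w : Euc d, ((Real.exp (τ w) * ρ w : ℝ) : ℂ))
        = ∫ w : Euc d, (Complex.exp (z w) * ((ρ w : ℝ) : ℂ)
            - ((Real.exp (τ w) * ρ w : ℝ) : ℂ)) := (integral_sub h2 h1.ofReal).symm
    rw [hsub]
    refine le_trans (norm_integral_le_integral_norm _) ?_
    have hpt : ∀ w : Euc d, ‖Complex.exp (z w) * ((ρ w : ℝ) : ℂ)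
        - ((Real.exp (τ w) * ρ w : ℝ) : ℂ)‖ ≤ (ε2 + ε2 ^ 2) * (Real.exp (τ w) * ρ w) := by
      intro w
      have hfac : Complex.exp (z w) * ((ρ w : ℝ) : ℂ) - ((Real.exp (τ w) * ρ w : ℝ) : ℂ)
          = ((Real.exp (τ w) : ℝ) : ℂ) * (Complex.exp (z w - ((τ w : ℝ) : ℂ)) - 1)
            * ((ρ w : ℝ) : ℂ) := by
        push_cast
        rw [Complex.exp_sub]
        field_simp [Complex.exp_ne_zero]
      rw [hfac]
      rw [norm_mul, norm_mul,
        Complex.norm_real, Real.norm_eq_abs, Complex.norm_real, Real.norm_eq_abs, abs_of_nonneg (Real.exp_pos _).le,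
        abs_of_nonneg (hρ0 w)]
      have hδ : ‖z w - ((τ w : ℝ) : ℂ)‖ ≤ ε2 := hτz w
      have hδ1 : ‖z w - ((τ w : ℝ) : ℂ)‖ ≤ 1 := le_trans hδ (by linarith)
      have hbd : ‖Complex.exp (z w - ((τ w : ℝ) : ℂ)) - 1‖ ≤ ε2 + ε2 ^ 2 := by
        set δ := z w - ((τ w : ℝ) : ℂ)
        have h3 := Complex.norm_exp_sub_one_sub_id_le hδ1
        have h4 : ‖Complex.exp δ - 1‖
            ≤ ‖Complex.exp δ - 1 - δ‖ + ‖δ‖ := by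
          calc ‖Complex.exp δ - 1‖ = ‖Complex.exp δ - 1 - δ + δ‖ := by
                ring_nf
            _ ≤ _ := norm_add_le _ _
        have h5 : ‖δ‖ ^ 2 ≤ ε2 ^ 2 := by
          apply pow_le_pow_left₀ (norm_nonneg _) hδ
        nlinarith [norm_nonneg δ]
      calc Real.exp (τ w) * ‖Complex.exp (z w - ((τ w : ℝ) : ℂ)) - 1‖ * ρ w
          ≤ Real.exp (τ w) * (ε2 + ε2 ^ 2) * ρ w := by
            apply mul_le_mul_of_nonneg_right _ (hρ0 w)
            exact mul_le_mul_of_nonneg_left hbd (Real.exp_pos _).le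
        _ = (ε2 + ε2 ^ 2) * (Real.exp (τ w) * ρ w) := by ring
    refine le_trans (integral_mono (h2.sub h1.ofReal).norm (h1.const_mul _) hpt) ?_
    rw [integral_const_mul, hX]
  clear_value X x I
  have hCne : (Cφ : ℂ) ≠ 0 := Complex.ofReal_ne_zero.mpr hCpos.ne'
  set A := -(((Cφ : ℂ))⁻¹ * I) with hA
  set β := (ε2 + ε2 ^ 2) * x with hβdef
  clear_value A β
  have hβ0 : 0 ≤ β := by
    rw [hβdef]; exact mul_nonneg (by positivity) (by linarith)
  have hβ8 : β ≤ 8 * ε2 := by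
    rw [hβdef]
    have h5 : ε2 ^ 2 ≤ ε2 := by nlinarith
    nlinarith
  have hβ1 : β ≤ 1 := by linarith
  have hD : ‖A + ((x : ℝ) : ℂ)‖ ≤ β := by
    have hAx : A + ((x : ℝ) : ℂ) = ((Cφ : ℂ))⁻¹ * ((X : ℂ) - I) := by
      rw [hA, hx]
      push_cast
      field_simp
      ring
    rw [hAx, norm_mul, norm_inv, Complex.norm_real, Real.norm_eq_abs, abs_of_pos hCpos]
    have h6 : ‖(X : ℂ) - I‖ = ‖I - (X : ℂ)‖ := by
      rw [← norm_neg]; ring_nf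
    rw [h6, hβdef, hx]
    rw [inv_mul_le_iff₀ hCpos]
    calc ‖I - (X:ℂ)‖ ≤ (ε2 + ε2 ^ 2) * X := hIX
      _ = Cφ * ((ε2 + ε2 ^ 2) * (X / Cφ)) := by field_simp
  -- u and the key bound
  set u := Cφ * Real.exp 1 * t * Real.exp (-x) with hu
  clear_value u
  have ht0 : 0 ≤ t := ht.1
  have hu0 : 0 ≤ u := by
    rw [hu]
    exact mul_nonneg (mul_nonneg (mul_nonneg hCpos.le (Real.exp_pos 1).le) ht.1)
      (Real.exp_pos _).le
  have huKx : u ≤ K * Real.exp (1 - x) := by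
    have h7 : Real.exp 1 * Real.exp (-x) = Real.exp (1 - x) := by
      rw [← Real.exp_add]; ring_nf
    calc u = (Cφ * t) * (Real.exp 1 * Real.exp (-x)) := by rw [hu]; ring
      _ = (Cφ * t) * Real.exp (1 - x) := by rw [h7]
      _ ≤ K * Real.exp (1 - x) := by
          apply mul_le_mul_of_nonneg_right _ (Real.exp_pos _).le
          rw [hK]; nlinarith [ht.2]
  have huK : u ≤ K := le_trans huKx (mul_le_of_le_one_right hK0
    (Real.exp_le_one_iff.mpr (by linarith)))
  have hkey : x * u / (1 + u) ≤ c := by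
    rw [hc, hE]
    have hlam0e' : K < Real.exp 1 := by rw [← hE]; exact hlam0e
    exact key_contraction hK0 hlam0e' hx1 hu0 huKx
  have h1u : (0:ℝ) < 1 + u := by linarith
  have hkey' : x * u ≤ c * (1 + u) := by
    rw [div_le_iff₀ h1u] at hkey; linarith
  -- Γ and W
  set Γ := 1 + (Cφ : ℂ) * lam * ((E : ℝ) : ℂ) * Complex.exp A with hΓ
  set W := Γ - (((1 + u : ℝ)) : ℂ) with hW
  clear_value Γ W
  have hWeq : W = (Cφ : ℂ) * ((E : ℝ) : ℂ) * ((lam - ((t:ℝ):ℂ)) * Complex.exp A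
      + ((t:ℝ):ℂ) * (Complex.exp A - ((Real.exp (-x) : ℝ) : ℂ))) := by
    rw [hW, hΓ, hu, hE]
    push_cast
    ring
  have habsexpA : ‖Complex.exp A‖ ≤ 1 := by
    rw [Complex.norm_exp]
    have h8 : A.re = (A + ((x:ℝ):ℂ)).re - x := by simp
    have h9 : (A + ((x:ℝ):ℂ)).re ≤ β :=
      le_trans (le_trans (le_abs_self _) (Complex.abs_re_le_norm _)) hD
    calc Real.exp A.re ≤ Real.exp 0 := Real.exp_le_exp.mpr (by rw [h8]; linarith)
      _ = 1 := Real.exp_zero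
  have hsplit : Complex.exp A = ((Real.exp (-x) : ℝ) : ℂ) * Complex.exp (A + ((x:ℝ):ℂ)) := by
    rw [Complex.ofReal_exp, ← Complex.exp_add]
    push_cast
    ring_nf
  have hexpAdiff : ‖Complex.exp A - ((Real.exp (-x) : ℝ) : ℂ)‖
      ≤ Real.exp (-x) * (β + β ^ 2) := by
    have h10 : Complex.exp A - ((Real.exp (-x) : ℝ) : ℂ)
        = ((Real.exp (-x) : ℝ) : ℂ) * (Complex.exp (A + ((x:ℝ):ℂ)) - 1) := by
      rw [hsplit]; ring
    rw [h10, norm_mul, Complex.norm_real, Real.norm_eq_abs, abs_of_pos (Real.exp_pos _)]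
    apply mul_le_mul_of_nonneg_left _ (Real.exp_pos _).le
    have h11 := abs_exp_sub_one_le' (le_trans hD hβ1)
    have h12 : ‖A + ((x:ℝ):ℂ)‖ ^ 2 ≤ β ^ 2 :=
      pow_le_pow_left₀ (norm_nonneg _) hD 2
    linarith
  have habsW : ‖W‖ ≤ 3 * Cφ * ε1 + u * (β + β ^ 2) := by
    rw [hWeq]
    rw [norm_mul, norm_mul, Complex.norm_real, Real.norm_eq_abs, Complex.norm_real, Real.norm_eq_abs,
      abs_of_pos hCpos, abs_of_pos he]
    refine le_trans (mul_le_mul_of_nonneg_left (norm_add_le _ _)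
      (by positivity)) ?_
    have h13 : ‖(lam - ((t:ℝ):ℂ)) * Complex.exp A‖ ≤ ε1 := by
      rw [norm_mul]
      calc ‖lam - ((t:ℝ):ℂ)‖ * ‖Complex.exp A‖
          ≤ ε1 * 1 := mul_le_mul hlamt.le habsexpA (norm_nonneg _) hε1pos.le
        _ = ε1 := mul_one _
    have h14 : ‖((t:ℝ):ℂ) * (Complex.exp A - ((Real.exp (-x) : ℝ) : ℂ))‖
        ≤ t * (Real.exp (-x) * (β + β ^ 2)) := by
      rw [norm_mul, Complex.norm_real, Real.norm_eq_abs, abs_of_nonneg ht0]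
      exact mul_le_mul_of_nonneg_left hexpAdiff ht0
    calc Cφ * E * (‖(lam - ((t:ℝ):ℂ)) * Complex.exp A‖
          + ‖((t:ℝ):ℂ) * (Complex.exp A - ((Real.exp (-x) : ℝ) : ℂ))‖)
        ≤ Cφ * E * (ε1 + t * (Real.exp (-x) * (β + β ^ 2))) := by
          apply mul_le_mul_of_nonneg_left _ (by positivity)
          linarith
      _ = Cφ * E * ε1 + u * (β + β ^ 2) := by rw [hu, hE]; ring
      _ ≤ 3 * Cφ * ε1 + u * (β + β ^ 2) := by nlinarith [mul_le_mul_of_nonneg_right he3 (mul_pos hCpos hε1pos).le]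
  -- the normalized perturbation
  set ww := W / (((1 + u : ℝ)) : ℂ) with hwwdef
  have hune : (((1 + u : ℝ)) : ℂ) ≠ 0 := by
    exact_mod_cast h1u.ne'
  have habsww0 : ‖ww‖ = ‖W‖ / (1 + u) := by
    rw [hwwdef, norm_div, Complex.norm_real, Real.norm_eq_abs, abs_of_pos h1u]
  have h3Cφ : 3 * Cφ * ε1 = (1 - c) * ε2 / 8 := by
    rw [hε1]; field_simp; ring
  have hε2sq : ε2 ^ 2 = (1 - c) / 600 * ε2 := by rw [hε2]; ring
  have habsww : ‖ww‖ ≤ c * ε2 + (1 - c) / 4 * ε2 := by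
    have hstep1 : ‖ww‖ ≤ (3 * Cφ * ε1 + u * (β + β ^ 2)) / (1 + u) := by
      rw [habsww0]
      gcongr
    have hstep2 : (3 * Cφ * ε1 + u * (β + β ^ 2)) / (1 + u)
        ≤ 3 * Cφ * ε1 + c * (ε2 + ε2 ^ 2) + β ^ 2 := by
      rw [div_le_iff₀ h1u]
      have hxu2 : u * β ≤ (ε2 + ε2 ^ 2) * (c * (1 + u)) := by
        have h15 := mul_le_mul_of_nonneg_left hkey'
          (show (0:ℝ) ≤ ε2 + ε2 ^ 2 by positivity)
        calc u * β = (ε2 + ε2 ^ 2) * (x * u) := by rw [hβdef]; ring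
          _ ≤ (ε2 + ε2 ^ 2) * (c * (1 + u)) := h15
      exact num_step2 (by positivity) hu0 hβ0 hxu2
    calc ‖ww‖ ≤ 3 * Cφ * ε1 + c * (ε2 + ε2 ^ 2) + β ^ 2 := le_trans hstep1 hstep2
      _ ≤ c * ε2 + (1 - c) / 4 * ε2 := num_habsww hc0 hc1 hε2 hβ0 hβ8 h3Cφ
  have habsww_half : ‖ww‖ ≤ ε2 := num_half habsww hc0 hc1 hε2pos
  have hΓfac : Γ = (((1 + u : ℝ)) : ℂ) * (1 + ww) := by
    have hune2 : (1 : ℂ) + (u : ℂ) ≠ 0 := by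
      have : ((1 + u : ℝ) : ℂ) = (1 : ℂ) + (u : ℂ) := by push_cast; ring
      rw [← this]; exact hune
    have h16 : (((1 + u : ℝ)) : ℂ) * (1 + ww) = (((1 + u : ℝ)) : ℂ) + W := by
      rw [hwwdef]; push_cast; field_simp [hune2]
    rw [h16, hW]; ring
  have h1w : (1 : ℂ) + ww ≠ 0 := by
    intro hcon
    have h17 : ww = -1 := by linear_combination hcon
    have h18 : ‖ww‖ = 1 := by rw [h17]; simp
    rw [h18] at habsww_half
    linarith
  have hΓne : Γ ≠ 0 := by rw [hΓfac]; exact mul_ne_zero hune h1w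
  refine ⟨hΓne, ?_⟩
  have hlogΓ : Complex.log Γ = ((Real.log (1 + u) : ℝ) : ℂ) + Complex.log (1 + ww) := by
    rw [hΓfac, Complex.log_ofReal_mul h1u h1w]
  have hwwlt1 : ‖ww‖ < 1 := by
    linarith
  have hhalf : ‖ww‖ ≤ 1 / 2 := by linarith
  have hlog1w : ‖Complex.log (1 + ww)‖ ≤ ‖ww‖ + ‖ww‖ ^ 2 := by
    have hb := Complex.norm_log_one_add_le hwwlt1
    exact num_log (norm_nonneg _) (norm_nonneg _) hhalf hb
  refine ⟨Real.log (1 + u), ⟨Real.log_nonneg (by linarith), ?_⟩, ?_⟩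
  · rw [hL]
    apply Real.log_le_log (by linarith)
    linarith
  · have h19 : Complex.log Γ - ((Real.log (1 + u) : ℝ) : ℂ) = Complex.log (1 + ww) := by
      rw [hlogΓ]; ring
    rw [h19]
    calc ‖Complex.log (1 + ww)‖ ≤ ‖ww‖ + ‖ww‖ ^ 2 := hlog1w
      _ < (1 + c) / 2 * ε2 :=
        num_final (norm_nonneg _) habsww habsww_half hc0 hc1 hε2


/-- Lemma 3.7: contraction of `g_λ(𝐳) = ψ(F(λ,ψ^{−1}(𝐳)))`, `ψ(x) = log(1 + C_φ x)`,
for non-constant `𝐳`: with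
`Γ = 1 + C_φ λ e · exp(−(1/C_φ)∫ e^{𝐳(w)}(1 − e^{−φ(w)}) dw)` one has `Γ ≠ 0`
and `Log Γ ∈ 𝒩(log(1+e), ε₃)`. -/
theorem contraction_nonconstant
    (d : ℕ) (hd : 1 ≤ d)
    (φ : Euc d → ENNReal) (hφmeas : Measurable φ)
    (hφsymm : ∀ x, φ (-x) = φ x)
    (hφtemp : Integrable (fun x : Euc d => 1 - expNeg (φ x)))
    (Cφ : ℝ) (hC : Cφ = ∫ x : Euc d, (1 - expNeg (φ x)))
    (hCpos : 0 < Cφ)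
    (lam0 : ℝ) (hlam0 : lam0 ∈ Set.Ico 0 (Real.exp 1 / Cφ)) :
    ∃ ε1 > 0, ∃ ε2 > 0, ∃ ε3 : ℝ, 0 < ε3 ∧ ε3 < ε2 ∧
      ∀ lam ∈ NN lam0 ε1,
        ∀ z : Euc d → ℂ, Measurable z →
          (∀ w : Euc d, z w ∈ NNbar (Real.log (1 + Real.exp 1)) ε2) →
          (1 + (Cφ : ℂ) * lam * (Real.exp 1 : ℂ) *
              Complex.exp (-(((Cφ : ℂ))⁻¹ *
                ∫ w : Euc d, Complex.exp (z w) * ((1 - expNeg (φ w) : ℝ) : ℂ))) ≠ 0) ∧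
          Complex.log (1 + (Cφ : ℂ) * lam * (Real.exp 1 : ℂ) *
              Complex.exp (-(((Cφ : ℂ))⁻¹ *
                ∫ w : Euc d, Complex.exp (z w) * ((1 - expNeg (φ w) : ℝ) : ℂ)))) ∈
            NN (Real.log (1 + Real.exp 1)) ε3 := by
  have hexp01 : ∀ t : ENNReal, 0 ≤ expNeg t ∧ expNeg t ≤ 1 := by
    intro t
    unfold expNeg
    split
    · norm_num
    · exact ⟨(Real.exp_pos _).le, Real.exp_le_one_iff.mpr (by simp [ENNReal.toReal_nonneg])⟩
  have hme : Measurable expNeg := by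
    unfold expNeg
    refine Measurable.ite (measurableSet_singleton ⊤) measurable_const ?_
    exact (Real.measurable_exp.comp measurable_neg).comp ENNReal.measurable_toReal
  exact aux_main d (fun w => 1 - expNeg (φ w))
    (measurable_const.sub (hme.comp hφmeas))
    (fun w => by show (0:ℝ) ≤ 1 - expNeg (φ w); linarith [(hexp01 (φ w)).2])
    (fun w => by show (1:ℝ) - expNeg (φ w) ≤ 1; linarith [(hexp01 (φ w)).1])
    hφtemp Cφ hCpos hC.symm lam0 hlam0.1
    (by
      have := hlam0.2
      rw [Set.mem_Ico] at hlam0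
      have h2 := (lt_div_iff₀ hCpos).mp hlam0.2
      linarith)


end
end
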